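/- arXiv:1402.5529 — 8 statements merged into one kernel-verified Lean document; each statement's English description precedes it below -/
import Mathlib

section
/- Let j > 0, δ > 0 and let u, v ∈ 𝓤_δ. Then the cut-and-paste operator is a contraction in total variation: |K^{(δ)}u − K^{(δ)}v|₁ ≤ |u − v|₁. -/
open MeasureTheory Set Filter

noncomputable section

/-- An element of the space `𝓤`: an atom `u.1 ≥ 0` at the origin together with a
density `u.2` on `ℝ₊`, representing the measure `u.1 δ₀ + u.2 dr`. -/
abbrev UEl := ℝ × (ℝ → ℝ)

/-- Membership in `𝓤`: nonnegative atom, nonnegative density which is in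
`L¹(ℝ₊) ∩ L^∞(ℝ₊)`. -/
def memU (u : UEl) : Prop :=
  0 ≤ u.1 ∧ (∀ r, 0 ≤ u.2 r) ∧
    Integrable u.2 (volume.restrict (Set.Ioi (0:ℝ))) ∧
    ∃ M : ℝ, ∀ r, u.2 r ≤ M

/-- The tail function `F(r; u) = c_u 𝟙_{{0}}(r) + ∫_r^∞ ρ_u`. -/
def tailF (u : UEl) (r : ℝ) : ℝ :=
  (if r = 0 then u.1 else 0) + ∫ x in Set.Ioi r, u.2 x

/-- Total variation distance `|u − v|₁ = |c_u − c_v| + ∫₀^∞ |ρ_u − ρ_v|`. -/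
def dist1 (u v : UEl) : ℝ :=
  |u.1 - v.1| + ∫ r in Set.Ioi (0:ℝ), |u.2 r - v.2 r|

/-- Membership in `𝓤_δ`: in `𝓤` and the density has mass `> jδ`. -/
def memUdelta (j δ : ℝ) (u : UEl) : Prop :=
  memU u ∧ j * δ < ∫ r in Set.Ioi (0:ℝ), u.2 r

/-- `R_δ(u) = inf {r ≥ 0 : F(r; u) = jδ}`. -/
def Rdelta (j δ : ℝ) (u : UEl) : ℝ :=
  sInf {r : ℝ | 0 ≤ r ∧ tailF u r = j * δ}

/-- The cut-and-paste operator `K^{(δ)} u = (jδ, ρ_u 𝟙_{[0, R_δ(u)]})`. -/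
def cutPaste (j δ : ℝ) (u : UEl) : UEl :=
  (j * δ, Set.indicator (Set.Icc 0 (Rdelta j δ u)) u.2)

/-- The Neumann heat kernel on `ℝ₊`. -/
def Gneum (t r r' : ℝ) : ℝ :=
  (Real.sqrt (2 * Real.pi * t))⁻¹ *
    (Real.exp (-(r - r')^2 / (2*t)) + Real.exp (-(r + r')^2 / (2*t)))

/-- The Neumann heat semigroup acting on `𝓤`: the result has zero atom and density
`r ↦ c_u G_t(r,0) + ∫₀^∞ G_t(r,r') ρ_u(r') dr'`. -/
def heat (t : ℝ) (u : UEl) : UEl :=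
  (0, fun r => u.1 * Gneum t r 0 + ∫ r' in Set.Ioi (0:ℝ), Gneum t r r' * u.2 r')

/-- Mass-transport partial order: `u ≤ v` iff `F(r;u) ≤ F(r;v)` for all `r ≥ 0`. -/
def Ule (u v : UEl) : Prop := ∀ r : ℝ, 0 ≤ r → tailF u r ≤ tailF v r

/-- Partial order modulo `m`: `F(r;u) ≤ F(r;v) + m` for all `r ≥ 0`. -/
def UleMod (u v : UEl) (m : ℝ) : Prop :=
  ∀ r : ℝ, 0 ≤ r → tailF u r ≤ tailF v r + m

/-- The lower barrier `S^{(δ,−)}_{kδ}(u)`. -/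
def Sminus (j δ : ℝ) (u : UEl) : ℕ → UEl
  | 0 => u
  | k+1 => cutPaste j δ (heat δ (Sminus j δ u k))

/-- The upper barrier `S^{(δ,+)}_{kδ}(u)`. -/
def Splus (j δ : ℝ) (u : UEl) : ℕ → UEl
  | 0 => u
  | k+1 => heat δ (cutPaste j δ (Splus j δ u k))

/-- A nonnegative density in `L¹(ℝ₊) ∩ L^∞(ℝ₊)`. -/
def goodFn (u : ℝ → ℝ) : Prop :=
  (∀ r, 0 ≤ u r) ∧ Integrable u (volume.restrict (Set.Ioi (0:ℝ))) ∧
    ∃ M : ℝ, ∀ r, u r ≤ M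

/-- Mass-transport order on densities: `∫_r^∞ u ≤ ∫_r^∞ v` for all `r ≥ 0`. -/
def fnLe (u v : ℝ → ℝ) : Prop :=
  ∀ r : ℝ, 0 ≤ r → (∫ x in Set.Ioi r, u x) ≤ ∫ x in Set.Ioi r, v x

end

section AuxLemmas

open MeasureTheory Set Filter Topology

private lemma integral_Ioi_split {f : ℝ → ℝ} {a b : ℝ} (hab : a ≤ b)
    (hf : IntegrableOn f (Set.Ioi a)) :
    (∫ x in Set.Ioi a, f x) = (∫ x in Set.Ioc a b, f x) + ∫ x in Set.Ioi b, f x := by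
  rw [← Set.Ioc_union_Ioi_eq_Ioi hab] at hf ⊢
  exact setIntegral_union Set.Ioc_disjoint_Ioi_same measurableSet_Ioi
    (hf.mono_set Set.subset_union_left) (hf.mono_set Set.subset_union_right)

private lemma Rdelta_spec (j δ : ℝ) (hjδ : 0 < j * δ) (u : UEl) (hu : memUdelta j δ u) :
    0 < Rdelta j δ u ∧ (∫ x in Set.Ioi (Rdelta j δ u), u.2 x) = j * δ := by
  obtain ⟨⟨hc, hρ, hInt, -⟩, hmass⟩ := hu
  set ρ := u.2 with hρdef
  set C := ∫ x in Set.Ioi (0:ℝ), ρ x with hCdef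
  set g : ℝ → ℝ := (Set.Ioi (0:ℝ)).indicator ρ with hgdef
  have hgInt : Integrable g := (integrable_indicator_iff measurableSet_Ioi).2 hInt
  set ψ : ℝ → ℝ := fun r => C - ∫ x in (0:ℝ)..r, g x with hψdef
  have hψcont : Continuous ψ :=
    continuous_const.sub
      (intervalIntegral.continuous_primitive (fun a b => hgInt.intervalIntegrable) 0)
  have key : ∀ r : ℝ, 0 ≤ r → (∫ x in Set.Ioi r, ρ x) = ψ r := by
    intro r hr
    have h1 : (∫ x in (0:ℝ)..r, g x) = ∫ x in Set.Ioc 0 r, ρ x := by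
      rw [intervalIntegral.integral_of_le hr]
      exact setIntegral_congr_fun measurableSet_Ioc
        (fun x hx => Set.indicator_of_mem hx.1 ρ)
    have h2 := integral_Ioi_split hr hInt
    simp only [hψdef, h1]
    rw [← hCdef] at h2
    rw [h2]; ring
  have hψ0 : ψ 0 = C := by simp [hψdef]
  have htop : Tendsto ψ atTop (𝓝 0) := by
    have h1 : Tendsto (fun r => ∫ x in (0:ℝ)..r, g x) atTop
        (𝓝 (∫ x in Set.Ioi (0:ℝ), g x)) :=
      intervalIntegral_tendsto_integral_Ioi 0 hgInt.integrableOn tendsto_id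
    have hCg : (∫ x in Set.Ioi (0:ℝ), g x) = C :=
      setIntegral_congr_fun measurableSet_Ioi (fun x hx => Set.indicator_of_mem hx ρ)
    have h2 : Tendsto ψ atTop (𝓝 (C - ∫ x in Set.Ioi (0:ℝ), g x)) :=
      tendsto_const_nhds.sub h1
    rwa [hCg, sub_self] at h2
  have hjC : j * δ < C := hmass
  obtain ⟨b, hb0, hbψ⟩ : ∃ b : ℝ, 0 ≤ b ∧ ψ b < j * δ :=
    ((eventually_ge_atTop (0:ℝ)).and (htop.eventually (gt_mem_nhds hjδ))).exists
  obtain ⟨R, hRmem, hRψ⟩ : ∃ R ∈ Set.Icc (0:ℝ) b, ψ R = j * δ :=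
    intermediate_value_Icc' hb0 hψcont.continuousOn ⟨hbψ.le, hψ0 ▸ hjC.le⟩
  have hRpos : 0 < R := by
    rcases lt_or_eq_of_le hRmem.1 with h | h
    · exact h
    · exfalso; rw [← h, hψ0] at hRψ; exact absurd hRψ.symm (ne_of_lt hjC)
  -- the set defining Rdelta
  set S : Set ℝ := {r : ℝ | 0 ≤ r ∧ tailF u r = j * δ} with hSdef
  have htail : ∀ r : ℝ, 0 < r → tailF u r = ∫ x in Set.Ioi r, ρ x := by
    intro r hr
    simp [tailF, if_neg (ne_of_gt hr)]; rfl
  have hRS : R ∈ S := ⟨hRpos.le, by rw [htail R hRpos, key R hRpos.le, hRψ]⟩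
  obtain ⟨ε, hε, hball⟩ : ∃ ε > 0, Metric.ball (0:ℝ) ε ⊆ {r | j * δ < ψ r} := by
    have hO : IsOpen {r : ℝ | j * δ < ψ r} := isOpen_lt continuous_const hψcont
    exact Metric.isOpen_iff.1 hO 0 (by simpa [hψ0] using hjC)
  have hSeq : S = Set.Ici ε ∩ ψ ⁻¹' {j * δ} := by
    ext r
    constructor
    · rintro ⟨hr0, hrF⟩
      have hrpos : 0 < r := by
        rcases lt_or_eq_of_le hr0 with h | h
        · exact h
        · exfalso
          have : tailF u 0 = u.1 + C := by simp [tailF, ← hCdef]; rfl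
          rw [← h] at hrF
          rw [this] at hrF
          have : j * δ < u.1 + C := lt_of_lt_of_le hjC (by linarith)
          linarith
      have hψr : ψ r = j * δ := by rw [← key r hr0, ← htail r hrpos, hrF]
      refine ⟨?_, hψr⟩
      by_contra hcon
      have hrε : r < ε := not_le.1 (by simpa [Set.mem_Ici] using hcon)
      have hb' : r ∈ Metric.ball (0:ℝ) ε := by
        simp only [Metric.mem_ball, Real.dist_eq, sub_zero, abs_of_nonneg hr0]
        exact hrε
      have hcontr := hball hb'
      simp only [Set.mem_setOf_eq, hψr] at hcontr
      exact lt_irrefl _ hcontr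
    · rintro ⟨hrε, hrψ⟩
      have hrpos : 0 < r := lt_of_lt_of_le hε hrε
      simp only [Set.mem_preimage, Set.mem_singleton_iff] at hrψ
      exact ⟨hrpos.le, by rw [htail r hrpos, key r hrpos.le, hrψ]⟩
  have hSclosed : IsClosed S := by
    rw [hSeq]
    exact isClosed_Ici.inter (isClosed_singleton.preimage hψcont)
  have hSbdd : BddBelow S := ⟨0, fun x hx => hx.1⟩
  have hmem : sInf S ∈ S := hSclosed.csInf_mem ⟨R, hRS⟩ hSbdd
  have hRd : Rdelta j δ u = sInf S := rfl
  have hpos : 0 < Rdelta j δ u := by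
    rw [hRd]
    have : sInf S ∈ Set.Ici ε ∩ ψ ⁻¹' {j * δ} := hSeq ▸ hmem
    exact lt_of_lt_of_le hε this.1
  refine ⟨hpos, ?_⟩
  have := hmem.2
  rw [← hRd] at this
  rw [htail _ hpos] at this
  exact this

private lemma dist1_comm (u v : UEl) : dist1 u v = dist1 v u := by
  simp only [dist1, abs_sub_comm u.1 v.1]
  congr 1
  exact setIntegral_congr_fun measurableSet_Ioi (fun x _ => abs_sub_comm _ _)

private lemma contraction_aux (j δ : ℝ) (hjδ : 0 < j * δ) (u v : UEl)
    (hu : memUdelta j δ u) (hv : memUdelta j δ v)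
    (hRle : Rdelta j δ u ≤ Rdelta j δ v) :
    dist1 (cutPaste j δ u) (cutPaste j δ v) ≤ dist1 u v := by
  obtain ⟨hRu, hIu⟩ := Rdelta_spec j δ hjδ u hu
  obtain ⟨hRv, hIv⟩ := Rdelta_spec j δ hjδ v hv
  set Ru := Rdelta j δ u with hRudef
  set Rv := Rdelta j δ v with hRvdef
  have hIntu : IntegrableOn u.2 (Set.Ioi (0:ℝ)) := hu.1.2.2.1
  have hIntv : IntegrableOn v.2 (Set.Ioi (0:ℝ)) := hv.1.2.2.1
  have hvnn : ∀ r, 0 ≤ v.2 r := hv.1.2.1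
  set fu : ℝ → ℝ := (Set.Icc (0:ℝ) Ru).indicator u.2 with hfudef
  set fv : ℝ → ℝ := (Set.Icc (0:ℝ) Rv).indicator v.2 with hfvdef
  have hfu : IntegrableOn fu (Set.Ioi (0:ℝ)) := hIntu.indicator measurableSet_Icc
  have hfv : IntegrableOn fv (Set.Ioi (0:ℝ)) := hIntv.indicator measurableSet_Icc
  have habs : IntegrableOn (fun x => |u.2 x - v.2 x|) (Set.Ioi (0:ℝ)) :=
    (hIntu.sub hIntv).abs
  have hD : IntegrableOn (fun x => |fu x - fv x|) (Set.Ioi (0:ℝ)) := (hfu.sub hfv).abs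
  -- LHS is just the integral
  have hLHS : dist1 (cutPaste j δ u) (cutPaste j δ v)
      = ∫ x in Set.Ioi (0:ℝ), |fu x - fv x| := by
    simp [dist1, cutPaste, hfudef, hfvdef, ← hRudef, ← hRvdef]
  -- split the integral at Ru
  have hsplit : (∫ x in Set.Ioi (0:ℝ), |fu x - fv x|)
      = (∫ x in Set.Ioc 0 Ru, |fu x - fv x|) + ∫ x in Set.Ioi Ru, |fu x - fv x| :=
    integral_Ioi_split hRu.le hD
  have hstep1 : (∫ x in Set.Ioc (0:ℝ) Ru, |fu x - fv x|)
      = ∫ x in Set.Ioc (0:ℝ) Ru, |u.2 x - v.2 x| := by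
    refine setIntegral_congr_fun measurableSet_Ioc (fun x hx => ?_)
    obtain ⟨hx1, hx2⟩ := hx
    rw [hfudef, hfvdef, Set.indicator_of_mem (Set.mem_Icc.2 ⟨hx1.le, hx2⟩),
      Set.indicator_of_mem (Set.mem_Icc.2 ⟨hx1.le, hx2.trans hRle⟩)]
  have hstep2 : (∫ x in Set.Ioi Ru, |fu x - fv x|) = ∫ x in Set.Ioc Ru Rv, v.2 x := by
    have h1 : (∫ x in Set.Ioi Ru, |fu x - fv x|) = ∫ x in Set.Ioi Ru, fv x := by
      refine setIntegral_congr_fun measurableSet_Ioi (fun x hx => ?_)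
      have hxnot : x ∉ Set.Icc (0:ℝ) Ru := fun h => absurd h.2 (not_le.2 hx)
      rw [hfudef, Set.indicator_of_notMem hxnot, zero_sub, abs_neg, abs_of_nonneg]
      exact Set.indicator_nonneg (fun y _ => hvnn y) x
    have h2 : Set.Ioi Ru ∩ Set.Icc (0:ℝ) Rv = Set.Ioc Ru Rv := by
      ext x
      simp only [Set.mem_inter_iff, Set.mem_Ioi, Set.mem_Icc, Set.mem_Ioc]
      constructor
      · rintro ⟨h1, h2⟩; exact ⟨h1, h2.2⟩
      · rintro ⟨h1, h2⟩; exact ⟨h1, (hRu.trans h1).le, h2⟩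
    rw [h1, hfvdef, setIntegral_indicator measurableSet_Icc, h2]
  have hIntvRu : IntegrableOn v.2 (Set.Ioi Ru) := hIntv.mono_set (Set.Ioi_subset_Ioi hRu.le)
  have hIntuRu : IntegrableOn u.2 (Set.Ioi Ru) := hIntu.mono_set (Set.Ioi_subset_Ioi hRu.le)
  have hstep3 : (∫ x in Set.Ioc Ru Rv, v.2 x) = (∫ x in Set.Ioi Ru, v.2 x) - j * δ := by
    have := integral_Ioi_split hRle hIntvRu
    rw [hIv] at this
    linarith
  have hstep4 : (∫ x in Set.Ioi Ru, v.2 x) - j * δ ≤ ∫ x in Set.Ioi Ru, |u.2 x - v.2 x| := by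
    rw [← hIu, ← integral_sub hIntvRu hIntuRu]
    refine integral_mono (hIntvRu.sub hIntuRu) (habs.mono_set (Set.Ioi_subset_Ioi hRu.le))
      (fun x => ?_)
    rw [abs_sub_comm]
    exact le_abs_self _
  have hjoin : (∫ x in Set.Ioc (0:ℝ) Ru, |u.2 x - v.2 x|)
      + (∫ x in Set.Ioi Ru, |u.2 x - v.2 x|)
      = ∫ x in Set.Ioi (0:ℝ), |u.2 x - v.2 x| := (integral_Ioi_split hRu.le habs).symm
  have hfinal : dist1 u v = |u.1 - v.1| + ∫ x in Set.Ioi (0:ℝ), |u.2 x - v.2 x| := rfl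
  rw [hLHS, hsplit, hstep1, hstep2, hstep3, hfinal]
  have := abs_nonneg (u.1 - v.1)
  linarith

end AuxLemmas


/-- the cut-and-paste operator is a contraction in total variation. -/
theorem cutPaste_contraction (j δ : ℝ) (hj : 0 < j) (hδ : 0 < δ)
    (u v : UEl) (hu : memUdelta j δ u) (hv : memUdelta j δ v) :
    dist1 (cutPaste j δ u) (cutPaste j δ v) ≤ dist1 u v := by
  have hjδ : 0 < j * δ := mul_pos hj hδ
  rcases le_total (Rdelta j δ u) (Rdelta j δ v) with h | h
  · exact contraction_aux j δ hjδ u v hu hv h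
  · rw [dist1_comm (cutPaste j δ u), dist1_comm u]
    exact contraction_aux j δ hjδ v u hv hu h
end

section
/- Let u, v ∈ L^∞(ℝ₊,ℝ₊) ∩ L¹(ℝ₊,ℝ₊) with u ≤ v and equal total masses F(0; u) = F(0; v), and let f(r) := sup{r' ≥ 0 : ∫₀^{r'} v(z) dz = ∫₀^r u(z) dz}. Then for every bounded measurable function φ ∈ L^∞(ℝ₊,ℝ), ∫₀^∞ v(r) φ(r) dr = ∫₀^∞ u(r) φ(f(r)) dr. -/
open MeasureTheory Set Filter

namespace MDaux
open MeasureTheory Set Filter Topology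
open scoped NNReal ENNReal
open MeasureTheory Set Filter Topology

noncomputable def prim (u : ℝ → ℝ) (r : ℝ) : ℝ := ∫ z in Set.Ioc (0:ℝ) r, u z

variable {u : ℝ → ℝ}

lemma intOn (hu : goodFn u) {s : Set ℝ} (hs : s ⊆ Set.Ioi 0) : IntegrableOn u s :=
  Integrable.mono_measure hu.2.1 (Measure.restrict_mono hs le_rfl)

lemma prim_nonneg (hu : goodFn u) (r : ℝ) : 0 ≤ prim u r :=
  setIntegral_nonneg measurableSet_Ioc (fun x _ => hu.1 x)

lemma prim_mono (hu : goodFn u) : Monotone (prim u) := by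
  intro r1 r2 h
  exact setIntegral_mono_set (intOn hu Ioc_subset_Ioi_self)
    (Filter.Eventually.of_forall fun x => hu.1 x)
    (HasSubset.Subset.eventuallyLE (Set.Ioc_subset_Ioc_right h))

lemma prim_zero (hr : r ≤ 0) : prim u r = 0 := by
  rw [prim, Set.Ioc_eq_empty (by exact fun h => absurd hr (not_le.2 h))]
  simp

lemma prim_add (hu : goodFn u) {r1 r2 : ℝ} (h0 : 0 ≤ r1) (h : r1 ≤ r2) :
    prim u r2 = prim u r1 + ∫ z in Set.Ioc r1 r2, u z := by
  have hsub : Set.Ioc r1 r2 ⊆ Set.Ioi 0 := fun x hx => lt_of_le_of_lt h0 hx.1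
  have := setIntegral_union (μ := volume) (f := u) (Set.Ioc_disjoint_Ioc_of_le le_rfl)
    measurableSet_Ioc (intOn hu Ioc_subset_Ioi_self) (intOn hu hsub)
  rw [Set.Ioc_union_Ioc_eq_Ioc h0 h] at this
  unfold prim
  exact this

lemma chunk_le (hu : goodFn u) {Mb : ℝ} (hM : ∀ r, u r ≤ Mb) {r1 r2 : ℝ}
    (h0 : 0 ≤ r1) (h : r1 ≤ r2) : (∫ z in Set.Ioc r1 r2, u z) ≤ Mb * (r2 - r1) := by
  have hsub : Set.Ioc r1 r2 ⊆ Set.Ioi 0 := fun x hx => lt_of_le_of_lt h0 hx.1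
  have h1 : (∫ z in Set.Ioc r1 r2, u z) ≤ ∫ _z in Set.Ioc r1 r2, Mb :=
    setIntegral_mono (intOn hu hsub)
      (integrableOn_const measure_Ioc_lt_top.ne) (fun x => hM x)
  rw [setIntegral_const, Real.volume_real_Ioc_of_le h, smul_eq_mul] at h1
  calc (∫ z in Set.Ioc r1 r2, u z) ≤ (r2 - r1) * Mb := h1
    _ = Mb * (r2 - r1) := mul_comm _ _

lemma prim_lip (hu : goodFn u) {Mb : ℝ} (hM : ∀ r, u r ≤ Mb) {r1 r2 : ℝ}
    (h0 : 0 ≤ r1) (h : r1 ≤ r2) : prim u r2 ≤ prim u r1 + Mb * (r2 - r1) := by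
  rw [prim_add hu h0 h]
  linarith [chunk_le hu hM h0 h]

lemma prim_compl (hu : goodFn u) {r : ℝ} (h0 : 0 ≤ r) :
    (∫ x in Set.Ioi (0:ℝ), u x) = prim u r + ∫ x in Set.Ioi r, u x := by
  have hd : Disjoint (Set.Ioc (0:ℝ) r) (Set.Ioi r) := by
    rw [Set.disjoint_left]; rintro x ⟨_, hx2⟩ hx3; exact absurd hx2 (not_le.2 hx3)
  have := setIntegral_union (μ := volume) (f := u) hd
    measurableSet_Ioi (intOn hu Ioc_subset_Ioi_self) (intOn hu (Set.Ioi_subset_Ioi h0))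
  rw [Set.Ioc_union_Ioi_eq_Ioi h0] at this
  rw [prim]
  exact this

lemma prim_le_mass (hu : goodFn u) (r : ℝ) : prim u r ≤ ∫ x in Set.Ioi (0:ℝ), u x := by
  rcases le_or_gt r 0 with h | h
  · rw [prim_zero h]
    exact setIntegral_nonneg measurableSet_Ioi (fun x _ => hu.1 x)
  · have := prim_compl hu h.le
    have h2 : 0 ≤ ∫ x in Set.Ioi r, u x :=
      setIntegral_nonneg measurableSet_Ioi (fun x _ => hu.1 x)
    linarith

lemma prim_tendsto (hu : goodFn u) :
    Tendsto (fun n : ℕ => prim u n) atTop (𝓝 (∫ x in Set.Ioi (0:ℝ), u x)) := by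
  have hU : ⋃ n : ℕ, Set.Ioc (0:ℝ) n = Set.Ioi 0 := by
    ext x
    simp only [Set.mem_iUnion, Set.mem_Ioc, Set.mem_Ioi]
    constructor
    · rintro ⟨n, h1, _⟩; exact h1
    · intro hx; obtain ⟨n, hn⟩ := exists_nat_ge x; exact ⟨n, hx, hn⟩
  have h := tendsto_setIntegral_of_monotone (μ := volume) (f := u)
    (fun n : ℕ => measurableSet_Ioc)
    (fun a b hab => Set.Ioc_subset_Ioc_right (Nat.cast_le.2 hab))
    (by rw [hU]; exact hu.2.1)
  rw [hU] at h
  exact h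

noncomputable def dmeas (u : ℝ → ℝ) : Measure ℝ :=
  (volume.restrict (Set.Ioi 0)).withDensity fun r => ENNReal.ofReal (u r)

lemma dmeas_apply (hu : goodFn u) {A : Set ℝ} (hA : MeasurableSet A) :
    dmeas u A = ENNReal.ofReal (∫ r in A ∩ Set.Ioi 0, u r) := by
  rw [dmeas, withDensity_apply _ hA, Measure.restrict_restrict hA,
    ofReal_integral_eq_lintegral_ofReal (intOn hu Set.inter_subset_right)
      (Filter.Eventually.of_forall fun x => hu.1 x)]

lemma dmeas_inter (hu : goodFn u) {A : Set ℝ} (hA : MeasurableSet A) :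
    dmeas u A = dmeas u (A ∩ Set.Ioi 0) := by
  rw [dmeas_apply hu hA, dmeas_apply hu (hA.inter measurableSet_Ioi),
    Set.inter_assoc, Set.inter_self]

lemma dmeas_univ (hu : goodFn u) :
    dmeas u Set.univ = ENNReal.ofReal (∫ x in Set.Ioi (0:ℝ), u x) := by
  rw [dmeas_apply hu MeasurableSet.univ, Set.univ_inter]

lemma dmeas_gt (hu : goodFn u) {c : ℝ} (hc0 : 0 ≤ c)
    (hcM : c ≤ ∫ x in Set.Ioi (0:ℝ), u x) :
    dmeas u {r | c < prim u r} =
      ENNReal.ofReal ((∫ x in Set.Ioi (0:ℝ), u x) - c) := by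
  obtain ⟨Mb, hMb⟩ := hu.2.2
  have hMb0 : 0 ≤ Mb := le_trans (hu.1 0) (hMb 0)
  set M := ∫ x in Set.Ioi (0:ℝ), u x with hMdef
  by_cases hex : ∃ r, 0 ≤ r ∧ c < prim u r
  · obtain ⟨r₀, hr₀, hr₀c⟩ := hex
    set A := {r : ℝ | 0 ≤ r ∧ prim u r ≤ c} with hAdef
    have h0A : (0:ℝ) ∈ A := ⟨le_refl 0, by rw [prim_zero le_rfl]; exact hc0⟩
    have hbdd : BddAbove A := by
      refine ⟨r₀, fun x hx => ?_⟩
      by_contra h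
      push_neg at h
      exact absurd (le_trans (prim_mono hu h.le) hx.2) (not_le.2 hr₀c)
    set s := sSup A with hsdef
    have hs0 : 0 ≤ s := le_csSup hbdd h0A
    have hsle : prim u s ≤ c := by
      by_contra hlt
      push_neg at hlt
      set ε := (prim u s - c) / (Mb + 1) with hεdef
      have hε : 0 < ε := div_pos (by linarith) (by linarith)
      obtain ⟨x, hxA, hxs⟩ := exists_lt_of_lt_csSup ⟨0, h0A⟩ (show s - ε < s by linarith)
      have hxle : x ≤ s := le_csSup hbdd hxA
      have h1 := prim_lip hu hMb hxA.1 hxle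
      have h2 : Mb * (s - x) ≤ Mb * ε := mul_le_mul_of_nonneg_left (by linarith) hMb0
      have h3 : (Mb + 1) * ε = prim u s - c := by
        rw [hεdef]; field_simp
      nlinarith [hxA.2]
    have hseq : prim u s = c := by
      by_contra hne
      have hlt : prim u s < c := lt_of_le_of_ne hsle hne
      set η := (c - prim u s) / (Mb + 1) with hηdef
      have hη : 0 < η := div_pos (by linarith) (by linarith)
      have h1 := prim_lip hu hMb hs0 (show s ≤ s + η by linarith)
      have h3 : (Mb + 1) * η = c - prim u s := by
        rw [hηdef]; field_simp
      have hmem : s + η ∈ A := ⟨by linarith, by nlinarith⟩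
      have := le_csSup hbdd hmem
      linarith
    have hset : {r | c < prim u r} = Set.Ioi s := by
      ext r
      simp only [Set.mem_setOf_eq, Set.mem_Ioi]
      constructor
      · intro h
        by_contra hrs
        push_neg at hrs
        have := prim_mono hu hrs
        rw [hseq] at this
        linarith
      · intro h
        by_contra hcr
        push_neg at hcr
        have : r ∈ A := ⟨le_trans hs0 h.le, hcr⟩
        exact absurd (le_csSup hbdd this) (not_le.2 h)
    rw [hset, dmeas_apply hu measurableSet_Ioi,
      Set.inter_eq_self_of_subset_left (Set.Ioi_subset_Ioi hs0)]
    congr 1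
    have := prim_compl hu hs0
    rw [hseq] at this
    linarith
  · push_neg at hex
    have hMc : M ≤ c := le_of_tendsto' (prim_tendsto hu)
      (fun n => hex n (Nat.cast_nonneg n))
    have hMceq : M = c := le_antisymm hMc hcM
    have hempty : {r | c < prim u r} = ∅ := by
      ext r
      simp only [Set.mem_setOf_eq, Set.mem_empty_iff_false, iff_false, not_lt]
      rcases le_or_gt r 0 with h | h
      · rw [prim_zero h]; exact hc0
      · exact hex r h.le
    rw [hempty, measure_empty, show M - c = 0 by linarith, ENNReal.ofReal_zero]

lemma dmeas_ge_le (hu : goodFn u) {c : ℝ} (hc0 : 0 ≤ c)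
    (hcM : c ≤ ∫ x in Set.Ioi (0:ℝ), u x) :
    dmeas u {r | c ≤ prim u r} ≤
      ENNReal.ofReal ((∫ x in Set.Ioi (0:ℝ), u x) - c) := by
  set M := ∫ x in Set.Ioi (0:ℝ), u x with hMdef
  rcases eq_or_lt_of_le hc0 with rfl | hc
  · calc dmeas u {r | 0 ≤ prim u r} ≤ dmeas u Set.univ := measure_mono (Set.subset_univ _)
      _ = ENNReal.ofReal (M - 0) := by rw [dmeas_univ hu, sub_zero]
  · apply ENNReal.le_of_forall_pos_le_add
    intro ε hε _
    have hε' : (0:ℝ) < ε := hε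
    set c' := max (c - ε) 0 with hc'def
    have hc'0 : 0 ≤ c' := le_max_right _ _
    have hc'c : c' < c := max_lt (by linarith) hc
    have hc'M : c' ≤ M := le_trans hc'c.le hcM
    have hsub : {r | c ≤ prim u r} ⊆ {r | c' < prim u r} :=
      fun r hr => lt_of_lt_of_le hc'c hr
    calc dmeas u {r | c ≤ prim u r} ≤ dmeas u {r | c' < prim u r} := measure_mono hsub
      _ = ENNReal.ofReal (M - c') := dmeas_gt hu hc'0 hc'M
      _ ≤ ENNReal.ofReal ((M - c) + ε) := by
          apply ENNReal.ofReal_le_ofReal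
          have : c - ε ≤ c' := le_max_left _ _
          linarith
      _ ≤ ENNReal.ofReal (M - c) + ENNReal.ofReal ε := ENNReal.ofReal_add_le
      _ = ENNReal.ofReal (M - c) + ε := by rw [ENNReal.ofReal_coe_nnreal]

lemma integral_dmeas (hu : goodFn u) (ψ : ℝ → ℝ) :
    ∫ r, ψ r ∂(dmeas u) = ∫ r in Set.Ioi (0:ℝ), u r * ψ r := by
  have hmeta : (fun r => ENNReal.ofReal (u r)) =
      fun r => ((Real.toNNReal (u r) : ℝ≥0) : ℝ≥0∞) := rfl
  have haem : AEMeasurable (fun r => Real.toNNReal (u r))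
      (volume.restrict (Set.Ioi (0:ℝ))) :=
    measurable_real_toNNReal.comp_aemeasurable hu.2.1.aemeasurable
  rw [dmeas, hmeta, integral_withDensity_eq_integral_smul₀ haem]
  refine integral_congr_ae (Filter.Eventually.of_forall fun r => ?_)
  simp [NNReal.smul_def, Real.coe_toNNReal _ (hu.1 r)]

end MDaux

open MDaux

/-- change of variables by the mass-displacement map:
`∫ v φ = ∫ u (φ ∘ f)` for every bounded measurable `φ`. -/
theorem mass_displacement_change_of_variables
    (u v : ℝ → ℝ) (hu : goodFn u) (hv : goodFn v)
    (hle : fnLe u v)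
    (hmass : (∫ x in Set.Ioi (0:ℝ), u x) = ∫ x in Set.Ioi (0:ℝ), v x)
    (f : ℝ → ℝ)
    (hf : ∀ r : ℝ, 0 ≤ r →
      IsLUB {r' : ℝ | 0 ≤ r' ∧
        (∫ z in Set.Ioc (0:ℝ) r', v z) = ∫ z in Set.Ioc (0:ℝ) r, u z} (f r)) :
    ∀ φ : ℝ → ℝ, Measurable φ → (∃ M : ℝ, ∀ r, |φ r| ≤ M) →
      (∫ r in Set.Ioi (0:ℝ), v r * φ r) = ∫ r in Set.Ioi (0:ℝ), u r * φ (f r) := by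
  intro φ hφm _hφb
  obtain ⟨Mv, hMv⟩ := hv.2.2
  have hMv0 : 0 ≤ Mv := le_trans (hv.1 0) (hMv 0)
  set M := ∫ x in Set.Ioi (0:ℝ), u x with hMdef
  -- the defining set, rephrased via prim
  have hf' : ∀ r : ℝ, 0 ≤ r →
      IsLUB {r' : ℝ | 0 ≤ r' ∧ prim v r' = prim u r} (f r) := hf
  -- nonemptiness of the sets
  have hne : ∀ r : ℝ, 0 ≤ r → ∃ s, 0 ≤ s ∧ prim v s = prim u r := by
    intro r hr
    by_contra h
    push_neg at h
    have h1 : f r - 1 ∈ upperBounds {r' : ℝ | 0 ≤ r' ∧ prim v r' = prim u r} := by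
      rintro x ⟨hx1, hx2⟩
      exact absurd hx2 (h x hx1)
    have := (hf' r hr).2 h1
    linarith
  -- basic facts about f
  have hf0 : ∀ r : ℝ, 0 ≤ r → 0 ≤ f r := by
    intro r hr
    obtain ⟨s, hs0, hs⟩ := hne r hr
    exact le_trans hs0 ((hf' r hr).1 ⟨hs0, hs⟩)
  have hfval : ∀ r : ℝ, 0 ≤ r → prim v (f r) = prim u r := by
    intro r hr
    obtain ⟨s, hs0, hs⟩ := hne r hr
    have hsf : s ≤ f r := (hf' r hr).1 ⟨hs0, hs⟩
    have hge : prim u r ≤ prim v (f r) := by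
      rw [← hs]; exact prim_mono hv hsf
    have hle2 : prim v (f r) ≤ prim u r := by
      by_contra hlt
      push_neg at hlt
      set ε := (prim v (f r) - prim u r) / (Mv + 1) with hεdef
      have hε : 0 < ε := div_pos (by linarith) (by linarith)
      have h1 : ¬ (f r - ε ∈ upperBounds {r' : ℝ | 0 ≤ r' ∧ prim v r' = prim u r}) := by
        intro hub
        have := (hf' r hr).2 hub
        linarith
      rw [upperBounds, Set.mem_setOf_eq] at h1
      push_neg at h1
      obtain ⟨x, ⟨hx0, hxv⟩, hxgt⟩ := h1
      have hxf : x ≤ f r := (hf' r hr).1 ⟨hx0, hxv⟩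
      have h2 := prim_lip hv hMv hx0 hxf
      have h3 : Mv * (f r - x) ≤ Mv * ε := mul_le_mul_of_nonneg_left (by linarith) hMv0
      have h4 : (Mv + 1) * ε = prim v (f r) - prim u r := by
        rw [hεdef]; field_simp
      nlinarith
    linarith
  have hfmono : ∀ r1 r2 : ℝ, 0 ≤ r1 → r1 ≤ r2 → f r1 ≤ f r2 := by
    intro r1 r2 h1 h12
    have h2 : (0:ℝ) ≤ r2 := le_trans h1 h12
    refine (hf' r1 h1).2 ?_
    rintro x ⟨hx0, hxv⟩
    by_contra h
    push_neg at h
    have hvle : prim v (f r2) ≤ prim v x := prim_mono hv h.le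
    rw [hfval r2 h2] at hvle
    have hum : prim u r1 ≤ prim u r2 := prim_mono hu h12
    have hxeq : prim v x = prim u r2 := by
      rw [hxv]; linarith [hxv ▸ hvle]
    exact absurd ((hf' r2 h2).1 ⟨hx0, hxeq⟩) (not_le.2 h)
  -- globalized monotone version of f
  set g : ℝ → ℝ := fun r => if 0 ≤ r then f r else f 0 with hgdef
  have hgmono : Monotone g := by
    intro a b hab
    by_cases ha : 0 ≤ a
    · have hb : 0 ≤ b := le_trans ha hab
      simp only [hgdef, if_pos ha, if_pos hb]
      exact hfmono a b ha hab
    · by_cases hb : 0 ≤ b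
      · simp only [hgdef, if_neg ha, if_pos hb]
        exact hfmono 0 b le_rfl hb
      · simp only [hgdef, if_neg ha, if_neg hb, le_refl]
  have hgmeas : Measurable g := hgmono.measurable
  have hg0 : ∀ r, 0 ≤ g r := by
    intro r
    by_cases hr : 0 ≤ r
    · simp only [hgdef, if_pos hr]; exact hf0 r hr
    · simp only [hgdef, if_neg hr]; exact hf0 0 le_rfl
  set μ := dmeas u with hμdef
  set ν := dmeas v with hνdef
  have hνM : ν Set.univ = ENNReal.ofReal M := by
    rw [hνdef, dmeas_univ hv, ← hmass]
  have hμM : μ Set.univ = ENNReal.ofReal M := by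
    rw [hμdef, dmeas_univ hu]
  -- the two measures agree on rays
  have hmapIoi : ∀ a : ℝ, (Measure.map g μ) (Set.Ioi a) = ν (Set.Ioi a) := by
    intro a
    rw [Measure.map_apply hgmeas measurableSet_Ioi]
    rcases lt_or_ge a 0 with ha | ha
    · have hpre : g ⁻¹' (Set.Ioi a) = Set.univ := by
        refine Set.eq_univ_of_forall fun r => ?_
        exact lt_of_lt_of_le ha (hg0 r)
      rw [hpre, hμM, hνdef, dmeas_apply hv measurableSet_Ioi,
        Set.inter_eq_self_of_subset_right (Set.Ioi_subset_Ioi ha.le), ← hmass]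
    · set c := prim v a with hcdef
      have hc0 : 0 ≤ c := prim_nonneg hv a
      have hcM : c ≤ M := by
        have := prim_le_mass hv a
        rw [← hmass] at this
        exact this
      have hlow : {r | c < prim u r} ⊆ g ⁻¹' (Set.Ioi a) := by
        intro r hr
        rw [Set.mem_setOf_eq] at hr
        have hr0 : 0 < r := by
          by_contra h
          push_neg at h
          rw [prim_zero h] at hr
          linarith
        rw [Set.mem_preimage, Set.mem_Ioi]
        have hgr : g r = f r := if_pos hr0.le
        rw [hgr]
        by_contra h
        push_neg at h
        have h2 : prim v (f r) ≤ prim v a := prim_mono hv h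
        rw [hfval r hr0.le] at h2
        rw [← hcdef] at h2
        linarith
      have hupp : g ⁻¹' (Set.Ioi a) ∩ Set.Ioi 0 ⊆ {r | c ≤ prim u r} := by
        rintro r ⟨hr1, hr2⟩
        rw [Set.mem_preimage, Set.mem_Ioi] at hr1
        rw [Set.mem_Ioi] at hr2
        have hgr : g r = f r := if_pos hr2.le
        rw [hgr] at hr1
        rw [Set.mem_setOf_eq, ← hfval r hr2.le, hcdef]
        exact prim_mono hv hr1.le
      have h1 : ENNReal.ofReal (M - c) ≤ μ (g ⁻¹' (Set.Ioi a)) := by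
        rw [← dmeas_gt hu hc0 hcM]
        exact measure_mono hlow
      have h2 : μ (g ⁻¹' (Set.Ioi a)) ≤ ENNReal.ofReal (M - c) := by
        rw [hμdef, dmeas_inter hu (hgmeas measurableSet_Ioi)]
        exact le_trans (measure_mono hupp) (dmeas_ge_le hu hc0 hcM)
      have hν : ν (Set.Ioi a) = ENNReal.ofReal (M - c) := by
        rw [hνdef, dmeas_apply hv measurableSet_Ioi,
          Set.inter_eq_self_of_subset_left (Set.Ioi_subset_Ioi ha)]
        congr 1
        have := prim_compl hv ha
        rw [← hmass] at this
        rw [← hcdef] at this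
        linarith
      rw [hν]
      exact le_antisymm h2 h1
  -- finiteness
  haveI : IsFiniteMeasure μ := ⟨by rw [hμM]; exact ENNReal.ofReal_lt_top⟩
  haveI : IsFiniteMeasure ν := ⟨by rw [hνM]; exact ENNReal.ofReal_lt_top⟩
  haveI : IsFiniteMeasure (Measure.map g μ) := ⟨by
    rw [Measure.map_apply hgmeas MeasurableSet.univ, Set.preimage_univ, hμM]
    exact ENNReal.ofReal_lt_top⟩
  have hmapuniv : (Measure.map g μ) Set.univ = ν Set.univ := by
    rw [Measure.map_apply hgmeas MeasurableSet.univ, Set.preimage_univ, hμM, hνM]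
  -- the pushforward equals ν
  have key : Measure.map g μ = ν := by
    refine Measure.ext_of_Iic _ _ fun a => ?_
    rw [← Set.compl_Ioi,
      measure_compl measurableSet_Ioi (measure_ne_top _ _),
      measure_compl measurableSet_Ioi (measure_ne_top _ _),
      hmapIoi a, hmapuniv]
  -- change of variables
  have hφs : AEStronglyMeasurable φ (Measure.map g μ) :=
    hφm.stronglyMeasurable.aestronglyMeasurable
  calc (∫ r in Set.Ioi (0:ℝ), v r * φ r) = ∫ r, φ r ∂ν := (integral_dmeas hv φ).symm
    _ = ∫ r, φ r ∂(Measure.map g μ) := by rw [key]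
    _ = ∫ r, φ (g r) ∂μ := integral_map hgmeas.aemeasurable hφs
    _ = ∫ r in Set.Ioi (0:ℝ), u r * φ (g r) := integral_dmeas hu _
    _ = ∫ r in Set.Ioi (0:ℝ), u r * φ (f r) := by
        refine setIntegral_congr_fun measurableSet_Ioi fun r hr => ?_
        rw [Set.mem_Ioi] at hr
        rw [show g r = f r from if_pos hr.le]
end

section
/- Left cut lemma: let u, v ∈ L^∞(ℝ₊,ℝ₊) ∩ L¹(ℝ₊,ℝ₊) with u ≤ v and m := F(0; v) − F(0; u) > 0, and let R̃ ≥ 0 satisfy ∫₀^{R̃} v(z) dz = m. Then, setting ṽ := v 𝟙_{[R̃,∞)}, one has u ≤ ṽ and F(0; u) = F(0; ṽ). -/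
open MeasureTheory Set Filter

/-- left cut: cutting the mass excess `m = F(0;v) − F(0;u)` from the
left of `v` gives `ṽ = v 𝟙_{[R̃,∞)}` with `u ≤ ṽ` and equal masses. -/
theorem left_cut (u v : ℝ → ℝ) (hu : goodFn u) (hv : goodFn v)
    (hle : fnLe u v) (m : ℝ)
    (hmdef : m = (∫ x in Set.Ioi (0:ℝ), v x) - ∫ x in Set.Ioi (0:ℝ), u x)
    (hm : 0 < m) (R : ℝ) (hR : 0 ≤ R)
    (hRm : (∫ z in Set.Ioc (0:ℝ) R, v z) = m) :
    fnLe u (Set.indicator (Set.Ici R) v) ∧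
      (∫ x in Set.Ioi (0:ℝ), u x) =
        ∫ x in Set.Ioi (0:ℝ), Set.indicator (Set.Ici R) v x := by
  obtain ⟨hupos, hui, -⟩ := hu
  obtain ⟨hvpos, hvi, -⟩ := hv
  have hviR : ∀ s : Set ℝ, s ⊆ Set.Ioi (0:ℝ) → MeasureTheory.IntegrableOn v s := by
    intro s hs
    exact hvi.mono_measure (MeasureTheory.Measure.restrict_mono hs le_rfl)
  have key : ∀ r : ℝ, 0 ≤ r → (∫ x in Set.Ioi r, Set.indicator (Set.Ici R) v x)
      = ∫ x in Set.Ioi (max r R), v x := by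
    intro r _
    rw [MeasureTheory.setIntegral_indicator measurableSet_Ici]
    apply MeasureTheory.setIntegral_congr_set
    have h1 : (Set.Ici R : Set ℝ) =ᵐ[volume] Set.Ioi R := (MeasureTheory.Ioi_ae_eq_Ici (a := R)).symm
    have h2 : (Set.Ioi r ∩ Set.Ioi R : Set ℝ) = Set.Ioi (max r R) := by rw [Set.Ioi_inter_Ioi]
    rw [← h2]
    exact MeasureTheory.ae_eq_set_inter (Filter.EventuallyEq.refl _ _) h1
  -- split integral of v
  have hsplit : (∫ x in Set.Ioi (0:ℝ), v x)
      = (∫ z in Set.Ioc (0:ℝ) R, v z) + ∫ x in Set.Ioi R, v x := by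
    rw [← MeasureTheory.setIntegral_union (Set.Ioc_disjoint_Ioi le_rfl) measurableSet_Ioi
      (hviR _ Set.Ioc_subset_Ioi_self) (hviR _ (Set.Ioi_subset_Ioi hR)),
      Set.Ioc_union_Ioi_eq_Ioi hR]
  have hmass : (∫ x in Set.Ioi (0:ℝ), u x) = ∫ x in Set.Ioi R, v x := by
    have := hsplit
    rw [hRm] at this
    linarith [hmdef ▸ hm]
  constructor
  · intro r hr
    rw [key r hr]
    rcases le_total R r with h | h
    · rw [max_eq_left h]; exact hle r hr
    · rw [max_eq_right h, ← hmass]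
      apply MeasureTheory.setIntegral_mono_set (hui)
        (Filter.Eventually.of_forall hupos)
      exact HasSubset.Subset.eventuallyLE (Set.Ioi_subset_Ioi hr)
  · rw [key 0 le_rfl, max_eq_right hR, hmass]
end

section
/- Right cut lemma: let u = (c_u, ρ_u), v = (c_v, ρ_v) ∈ 𝓤 and m > 0 with m ≤ ∫₀^∞ ρ_u, and suppose u ≤ v modulo m. Then the truncation u* := (c_u, ρ_u 𝟙_{[0,R_m]}), where R_m := inf{r : F(r; u) = m}, satisfies u* ≤ v. -/
open MeasureTheory Set Filter

/-- right cut: if `u ≤ v` modulo `m` then the right truncation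
`u* = (c_u, ρ_u 𝟙_{[0,R_m]})` with `R_m = inf{r : F(r;u) = m}` satisfies `u* ≤ v`. -/
theorem right_cut (u v : UEl) (hu : memU u) (hv : memU v)
    (m : ℝ) (hm : 0 < m) (hm' : m ≤ ∫ r in Set.Ioi (0:ℝ), u.2 r)
    (hle : UleMod u v m) :
    Ule (u.1, Set.indicator
        (Set.Icc 0 (sInf {r : ℝ | 0 ≤ r ∧ tailF u r = m})) u.2) v := by
  obtain ⟨hc, hρ0, hρint, -⟩ := hu
  obtain ⟨hcv, hρv0, -, -⟩ := hv
  set R := sInf {r : ℝ | 0 ≤ r ∧ tailF u r = m} with hRdef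
  have hint : ∀ r : ℝ, 0 ≤ r → IntegrableOn u.2 (Set.Ioi r) volume := by
    intro r hr
    exact hρint.mono_measure (Measure.restrict_mono (Set.Ioi_subset_Ioi hr) le_rfl)
  have hsplit : ∀ r s : ℝ, 0 ≤ r → r ≤ s →
      (∫ x in Set.Ioi r, u.2 x) = (∫ x in Set.Ioc r s, u.2 x) + ∫ x in Set.Ioi s, u.2 x := by
    intro r s hr hrs
    rw [← Set.Ioc_union_Ioi_eq_Ioi hrs]
    exact setIntegral_union (Set.Ioc_disjoint_Ioi le_rfl) measurableSet_Ioi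
      ((hint r hr).mono_set Set.Ioc_subset_Ioi_self) (hint s (hr.trans hrs))
  have hmono : ∀ r s : ℝ, 0 ≤ r → r ≤ s →
      (∫ x in Set.Ioi s, u.2 x) ≤ ∫ x in Set.Ioi r, u.2 x := by
    intro r s hr hrs
    rw [hsplit r s hr hrs]
    have h0 : 0 ≤ ∫ x in Set.Ioc r s, u.2 x :=
      setIntegral_nonneg measurableSet_Ioc (fun x _ => hρ0 x)
    linarith
  have hR0 : 0 ≤ R := Real.sInf_nonneg (fun x hx => hx.1)
  have hmR : m ≤ ∫ x in Set.Ioi R, u.2 x := by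
    rcases Set.eq_empty_or_nonempty {r : ℝ | 0 ≤ r ∧ tailF u r = m} with he | ⟨s, hs⟩
    · rw [hRdef, he, Real.sInf_empty]
      exact hm'
    · have hRs : R ≤ s := csInf_le ⟨0, fun x hx => hx.1⟩ hs
      have hGs : m ≤ ∫ x in Set.Ioi s, u.2 x := by
        rcases eq_or_lt_of_le hs.1 with h0 | h0
        · rw [← h0]; exact hm'
        · have h2 := hs.2
          unfold tailF at h2
          rw [if_neg (ne_of_gt h0)] at h2
          linarith
      exact hGs.trans (hmono R s hR0 hRs)
  have hvnn : ∀ r : ℝ, 0 ≤ tailF v r := by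
    intro r
    unfold tailF
    have h1 : 0 ≤ ∫ x in Set.Ioi r, v.2 x :=
      setIntegral_nonneg measurableSet_Ioi (fun x _ => hρv0 x)
    have h2 : 0 ≤ (if r = 0 then v.1 else 0) := by positivity
    linarith
  intro r hr
  have hind : (∫ x in Set.Ioi r, Set.indicator (Set.Icc 0 R) u.2 x)
      = ∫ x in Set.Ioi r ∩ Set.Icc 0 R, u.2 x :=
    setIntegral_indicator measurableSet_Icc
  rcases le_total r R with hrR | hRr
  · -- r ≤ R
    have hset : Set.Ioi r ∩ Set.Icc 0 R = Set.Ioc r R := by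
      ext x
      constructor
      · rintro ⟨h1, _, h3⟩; exact ⟨h1, h3⟩
      · rintro ⟨h1, h2⟩; exact ⟨h1, hr.trans h1.le, h2⟩
    have key := hsplit r R hr hrR
    have hle' := hle r hr
    unfold tailF at hle' ⊢
    rw [hind, hset]
    simp only at hle' ⊢
    linarith
  · -- R ≤ r
    have hset : Set.Ioi r ∩ Set.Icc 0 R = (∅ : Set ℝ) := by
      ext x
      simp only [Set.mem_inter_iff, Set.mem_Ioi, Set.mem_Icc, Set.mem_empty_iff_false,
        iff_false, not_and]
      intro h1 h2 h3
      exact absurd (hRr.trans_lt h1) (not_lt.mpr h3)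
    unfold tailF
    rw [hind, hset]
    simp only [Measure.restrict_empty, integral_zero_measure, add_zero]
    by_cases h0 : r = 0
    · rw [if_pos h0]
      have hle' := hle 0 le_rfl
      unfold tailF at hle'
      rw [if_pos rfl] at hle'
      have := hvnn r
      subst h0
      linarith
    · rw [if_neg h0]
      exact hvnn r
end

section
/- Let u, v ∈ 𝓤 with u ≤ v. Then for every t > 0, G_t^{neum} * u ≤ G_t^{neum} * v. -/
open MeasureTheory Set Filter

noncomputable section
namespace HM
def gg (t z : ℝ) : ℝ := Real.exp (-z^2 / (2*t))
def CC (t : ℝ) : ℝ := (Real.sqrt (2 * Real.pi * t))⁻¹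

lemma Gneum_eq (t x y : ℝ) : Gneum t x y = CC t * (gg t (x-y) + gg t (x+y)) := rfl

lemma CC_nonneg (t : ℝ) : 0 ≤ CC t := inv_nonneg.2 (Real.sqrt_nonneg _)

lemma gg_nonneg (t z : ℝ) : 0 ≤ gg t z := (Real.exp_pos _).le
lemma gg_le_one (t z : ℝ) (ht : 0 < t) : gg t z ≤ 1 := by
  rw [gg, Real.exp_le_one_iff]
  apply div_nonpos_of_nonpos_of_nonneg (neg_nonpos.2 (sq_nonneg z)) (by positivity)

lemma gg_anti (t : ℝ) (ht : 0 < t) {a b : ℝ} (h : a^2 ≤ b^2) : gg t b ≤ gg t a := by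
  apply Real.exp_le_exp.2
  have h2t : (0:ℝ) < 2*t := by linarith
  gcongr

lemma gg_integrable (t : ℝ) (ht : 0 < t) : Integrable (gg t) volume := by
  have : gg t = fun z => Real.exp (-(1/(2*t)) * z^2) := by
    funext z; rw [gg]; ring_nf
  rw [this]; exact integrable_exp_neg_mul_sq (by positivity)

lemma Gneum_nonneg (t x y : ℝ) : 0 ≤ Gneum t x y := by
  rw [Gneum_eq]
  have := gg_nonneg t (x-y); have := gg_nonneg t (x+y); have := CC_nonneg t
  positivity

lemma Gneum_integrable (t : ℝ) (ht : 0 < t) (y : ℝ) (s : Set ℝ) :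
    IntegrableOn (fun x => Gneum t x y) s volume := by
  apply Integrable.integrableOn
  have h1 : Integrable (fun x => gg t (x - y)) volume := (gg_integrable t ht).comp_sub_right y
  have h2 : Integrable (fun x => gg t (x + y)) volume := by
    simpa using (gg_integrable t ht).comp_sub_right (-y)
  simpa [Gneum_eq] using (h1.add h2).const_mul (CC t)


def II (t a : ℝ) : ℝ := ∫ z in Ioi a, gg t z
def Hker (t r y : ℝ) : ℝ := ∫ x in Ioi r, Gneum t x y
def hker (t r s : ℝ) : ℝ := CC t * (gg t (r-s) - gg t (r+s))

lemma gg_continuous (t : ℝ) : Continuous (gg t) := by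
  unfold gg; fun_prop

lemma hker_nonneg (t : ℝ) (ht : 0 < t) {r s : ℝ} (hr : 0 ≤ r) (hs : 0 ≤ s) :
    0 ≤ hker t r s := by
  have := gg_anti t ht (a := r - s) (b := r + s) (by nlinarith)
  exact mul_nonneg (CC_nonneg t) (sub_nonneg.2 this)

lemma Hker_nonneg (t r y : ℝ) : 0 ≤ Hker t r y :=
  setIntegral_nonneg measurableSet_Ioi fun x _ => Gneum_nonneg t x y

lemma integral_shift (t : ℝ) (a y : ℝ) :
    ∫ x in Ioi a, gg t (x - y) = ∫ z in Ioi (a - y), gg t z := by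
  have h := (measurePreserving_sub_right volume y).setIntegral_preimage_emb
    (MeasurableEquiv.measurableEmbedding (MeasurableEquiv.subRight y)) (gg t) (Ioi (a - y))
  have hs : (fun x => x - y) ⁻¹' (Ioi (a - y)) = Ioi a := by
    ext x; simp [sub_lt_sub_iff_right]
  simpa [hs] using h

lemma Hker_eq (t : ℝ) (ht : 0 < t) (r y : ℝ) :
    Hker t r y = CC t * (II t (r - y) + II t (r + y)) := by
  have h1 : IntegrableOn (fun x => gg t (x - y)) (Ioi r) volume :=
    ((gg_integrable t ht).comp_sub_right y).integrableOn
  have h2 : IntegrableOn (fun x => gg t (x + y)) (Ioi r) volume := by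
    have := ((gg_integrable t ht).comp_sub_right (-y)).integrableOn (s := Ioi r)
    simpa using this
  rw [Hker]
  simp only [Gneum_eq]
  rw [MeasureTheory.integral_const_mul, integral_add h1 h2, integral_shift t r y]
  have h3 : ∫ x in Ioi r, gg t (x + y) = ∫ z in Ioi (r + y), gg t z := by
    have := integral_shift t r (-y)
    simpa [sub_neg_eq_add] using this
  rw [h3, II, II]

lemma II_split (t : ℝ) (ht : 0 < t) {a b : ℝ} (hab : a ≤ b) :
    II t a = (∫ z in a..b, gg t z) + II t b := by
  rw [intervalIntegral.integral_of_le hab, II, II, ← setIntegral_union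
    (Ioc_disjoint_Ioi le_rfl) measurableSet_Ioi
    (gg_integrable t ht).integrableOn (gg_integrable t ht).integrableOn,
    Ioc_union_Ioi_eq_Ioi hab]

lemma Hker_formula (t : ℝ) (ht : 0 < t) (r y : ℝ) (hy : 0 ≤ y) :
    Hker t r y = Hker t r 0 + ∫ s in Ioc 0 y, hker t r s := by
  have e1 : II t (r - y) = (∫ z in (r-y)..r, gg t z) + II t r :=
    II_split t ht (by linarith)
  have e2 : II t r = (∫ z in r..(r+y), gg t z) + II t (r+y) :=
    II_split t ht (by linarith)
  have c1 : ∫ z in (r-y)..r, gg t z = ∫ s in (0:ℝ)..y, gg t (r - s) := by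
    rw [intervalIntegral.integral_comp_sub_left (gg t) r]; norm_num
  have c2 : ∫ z in r..(r+y), gg t z = ∫ s in (0:ℝ)..y, gg t (r + s) := by
    rw [intervalIntegral.integral_comp_add_left (gg t) r]; norm_num
  have i1 : IntervalIntegrable (fun s => gg t (r - s)) volume 0 y :=
    (((gg_continuous t).comp (by fun_prop : Continuous fun s : ℝ => r - s))).intervalIntegrable 0 y
  have i2 : IntervalIntegrable (fun s => gg t (r + s)) volume 0 y :=
    (((gg_continuous t).comp (by fun_prop : Continuous fun s : ℝ => r + s))).intervalIntegrable 0 y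
  have : ∫ s in Ioc 0 y, hker t r s = ∫ s in (0:ℝ)..y, hker t r s :=
    (intervalIntegral.integral_of_le hy).symm
  rw [this]
  have : ∫ s in (0:ℝ)..y, hker t r s
      = CC t * ((∫ s in (0:ℝ)..y, gg t (r - s)) - ∫ s in (0:ℝ)..y, gg t (r + s)) := by
    rw [← intervalIntegral.integral_sub i1 i2, ← intervalIntegral.integral_const_mul]
    rfl
  rw [this, Hker_eq t ht r y, Hker_eq t ht r 0, e1, e2, ← c1, ← c2]
  ring_nf
  rw [e2]
  ring


lemma Gneum_continuous (t : ℝ) : Continuous fun p : ℝ × ℝ => Gneum t p.1 p.2 := by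
  unfold Gneum; fun_prop

lemma hker_continuous (t r : ℝ) : Continuous (hker t r) := by
  unfold hker gg; fun_prop

lemma tail_ofReal_Hker (t r : ℝ) (ht : 0 < t) (hr : 0 ≤ r) {y : ℝ} (hy : 0 ≤ y) :
    ENNReal.ofReal (Hker t r y) = ENNReal.ofReal (Hker t r 0)
      + ∫⁻ s in Ioi (0:ℝ), (Iic y).indicator (fun s => ENNReal.ofReal (hker t r s)) s := by
  have hint : IntegrableOn (hker t r) (Ioc 0 y) volume :=
    (hker_continuous t r).integrableOn_Ioc
  have hnn : 0 ≤ᶠ[ae (volume.restrict (Ioc 0 y))] hker t r := by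
    rw [EventuallyLE, ae_restrict_iff' measurableSet_Ioc]
    exact Eventually.of_forall fun s hs => hker_nonneg t ht hr hs.1.le
  rw [Hker_formula t ht r y hy,
    ENNReal.ofReal_add (Hker_nonneg t r 0) (integral_nonneg_of_ae hnn),
    ofReal_integral_eq_lintegral_ofReal hint hnn]
  congr 1
  rw [lintegral_indicator measurableSet_Iic, Measure.restrict_restrict measurableSet_Iic,
    Set.inter_comm, Set.Ioi_inter_Iic]

lemma Gneum_cont_left (t y : ℝ) : Continuous fun x => Gneum t x y := by
  unfold Gneum; fun_prop

lemma meas_oG (t : ℝ) : Measurable fun p : ℝ × ℝ => ENNReal.ofReal (Gneum t p.1 p.2) :=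
  ENNReal.measurable_ofReal.comp (Gneum_continuous t).measurable

lemma meas_oG_left (t y : ℝ) : Measurable fun x => ENNReal.ofReal (Gneum t x y) :=
  ENNReal.measurable_ofReal.comp (Gneum_cont_left t y).measurable

lemma meas_oρ {ρ : ℝ → ℝ} (hm : Measurable ρ) :
    Measurable fun y => ENNReal.ofReal (ρ y) := ENNReal.measurable_ofReal.comp hm

lemma meas_oh (t r : ℝ) : Measurable fun s => ENNReal.ofReal (hker t r s) :=
  ENNReal.measurable_ofReal.comp (hker_continuous t r).measurable

lemma meas_ind (t r y : ℝ) :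
    Measurable fun s => (Iic y).indicator (fun s' => ENNReal.ofReal (hker t r s')) s :=
  (meas_oh t r).indicator measurableSet_Iic

lemma meas_ind2 (t r : ℝ) : Measurable (Function.uncurry fun y s =>
    (Iic y).indicator (fun s' => ENNReal.ofReal (hker t r s')) s) := by
  have : (Function.uncurry fun y s =>
      (Iic y).indicator (fun s' => ENNReal.ofReal (hker t r s')) s)
      = fun p : ℝ × ℝ => if p.2 ≤ p.1 then ENNReal.ofReal (hker t r p.2) else 0 := by
    funext p
    simp [Function.uncurry, Set.indicator_apply]
  rw [this]
  exact Measurable.ite (measurableSet_le measurable_snd measurable_fst)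
    ((meas_oh t r).comp measurable_snd) measurable_const

lemma LA (t r c : ℝ) (ht : 0 < t) (hc : 0 ≤ c) :
    ∫⁻ x in Ioi r, ENNReal.ofReal (c * Gneum t x 0)
      = ENNReal.ofReal c * ENNReal.ofReal (Hker t r 0) := by
  simp_rw [ENNReal.ofReal_mul hc]
  rw [lintegral_const_mul _ (meas_oG_left t 0),
    ← ofReal_integral_eq_lintegral_ofReal (Gneum_integrable t ht 0 (Ioi r))
      (Eventually.of_forall fun x => Gneum_nonneg t x 0)]
  rfl

lemma LB (t r : ℝ) (ht : 0 < t) (ρ : ℝ → ℝ) (hm : Measurable ρ) :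
    ∫⁻ x in Ioi r, ∫⁻ y in Ioi (0:ℝ),
        ENNReal.ofReal (Gneum t x y) * ENNReal.ofReal (ρ y)
      = ∫⁻ y in Ioi (0:ℝ), ENNReal.ofReal (Hker t r y) * ENNReal.ofReal (ρ y) := by
  rw [lintegral_lintegral_swap
    ((meas_oG t).mul ((meas_oρ hm).comp measurable_snd)).aemeasurable]
  refine lintegral_congr fun y => ?_
  rw [lintegral_mul_const _ (meas_oG_left t y),
    ← ofReal_integral_eq_lintegral_ofReal (Gneum_integrable t ht y (Ioi r))
      (Eventually.of_forall fun x => Gneum_nonneg t x y)]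
  rfl

lemma LC (t r : ℝ) (ht : 0 < t) (hr : 0 ≤ r) (ρ : ℝ → ℝ) (hm : Measurable ρ) :
    ∫⁻ y in Ioi (0:ℝ), ENNReal.ofReal (Hker t r y) * ENNReal.ofReal (ρ y)
      = ENNReal.ofReal (Hker t r 0) * (∫⁻ y in Ioi (0:ℝ), ENNReal.ofReal (ρ y))
        + ∫⁻ y in Ioi (0:ℝ), (∫⁻ s in Ioi (0:ℝ),
            (Iic y).indicator (fun s' => ENNReal.ofReal (hker t r s')) s)
            * ENNReal.ofReal (ρ y) := by
  have step : ∫⁻ y in Ioi (0:ℝ), ENNReal.ofReal (Hker t r y) * ENNReal.ofReal (ρ y)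
      = ∫⁻ y in Ioi (0:ℝ),
          (ENNReal.ofReal (Hker t r 0) * ENNReal.ofReal (ρ y)
          + (∫⁻ s in Ioi (0:ℝ),
              (Iic y).indicator (fun s' => ENNReal.ofReal (hker t r s')) s)
            * ENNReal.ofReal (ρ y)) := by
    refine setLIntegral_congr_fun measurableSet_Ioi (fun y hy => ?_)
    rw [tail_ofReal_Hker t r ht hr (le_of_lt hy), add_mul]
  rw [step, lintegral_add_left ((meas_oρ hm).const_mul _),
    lintegral_const_mul _ (meas_oρ hm)]

lemma LD (t r : ℝ) (ht : 0 < t) (hr : 0 ≤ r) (ρ : ℝ → ℝ) (hm : Measurable ρ) :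
    ∫⁻ y in Ioi (0:ℝ), (∫⁻ s in Ioi (0:ℝ),
        (Iic y).indicator (fun s' => ENNReal.ofReal (hker t r s')) s)
        * ENNReal.ofReal (ρ y)
      = ∫⁻ s in Ioi (0:ℝ), ENNReal.ofReal (hker t r s)
          * ∫⁻ y in Ioi s, ENNReal.ofReal (ρ y) := by
  have step1 : ∫⁻ y in Ioi (0:ℝ), (∫⁻ s in Ioi (0:ℝ),
        (Iic y).indicator (fun s' => ENNReal.ofReal (hker t r s')) s)
        * ENNReal.ofReal (ρ y)
      = ∫⁻ y in Ioi (0:ℝ), ∫⁻ s in Ioi (0:ℝ),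
        (Iic y).indicator (fun s' => ENNReal.ofReal (hker t r s')) s
        * ENNReal.ofReal (ρ y) := by
    refine lintegral_congr fun y => ?_
    rw [lintegral_mul_const _ (meas_ind t r y)]
  rw [step1, lintegral_lintegral_swap
    ((meas_ind2 t r).mul ((meas_oρ hm).comp measurable_fst)).aemeasurable]
  refine setLIntegral_congr_fun measurableSet_Ioi (fun s hs => ?_)
  have key : ∀ y : ℝ, (Iic y).indicator (fun s' => ENNReal.ofReal (hker t r s')) s
      * ENNReal.ofReal (ρ y)
      = (Ici s).indicator (fun y' => ENNReal.ofReal (hker t r s) * ENNReal.ofReal (ρ y')) y := by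
    intro y
    by_cases h : s ≤ y <;> simp [Set.indicator_apply, h]
  simp_rw [key]
  rw [lintegral_indicator measurableSet_Ici,
    Measure.restrict_restrict measurableSet_Ici]
  have hsub : Ici s ∩ Ioi (0:ℝ) = Ici s :=
    inter_eq_self_of_subset_left fun x hx => mem_Ioi.2 (lt_of_lt_of_le (mem_Ioi.1 hs) (mem_Ici.1 hx))
  rw [hsub, ← Measure.restrict_congr_set Ioi_ae_eq_Ici,
    lintegral_const_mul _ (meas_oρ hm)]

lemma Lrep (t r c : ℝ) (ht : 0 < t) (hr : 0 ≤ r) (hc : 0 ≤ c) (ρ : ℝ → ℝ)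
    (hm : Measurable ρ) :
    ∫⁻ x in Ioi r, (ENNReal.ofReal (c * Gneum t x 0)
        + ∫⁻ y in Ioi (0:ℝ), ENNReal.ofReal (Gneum t x y) * ENNReal.ofReal (ρ y))
    = ENNReal.ofReal (Hker t r 0)
        * (ENNReal.ofReal c + ∫⁻ y in Ioi (0:ℝ), ENNReal.ofReal (ρ y))
      + ∫⁻ s in Ioi (0:ℝ), ENNReal.ofReal (hker t r s)
          * ∫⁻ y in Ioi s, ENNReal.ofReal (ρ y) := by
  have hmc : Measurable fun x => ENNReal.ofReal (c * Gneum t x 0) :=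
    ENNReal.measurable_ofReal.comp (measurable_const.mul (Gneum_cont_left t 0).measurable)
  rw [lintegral_add_left hmc, LA t r c ht hc, LB t r ht ρ hm, LC t r ht hr ρ hm,
    LD t r ht hr ρ hm]
  ring

lemma Gneum_le_two (t x y : ℝ) (ht : 0 < t) : Gneum t x y ≤ 2 * CC t := by
  rw [Gneum_eq]
  have h1 := gg_le_one t (x-y) ht
  have h2 := gg_le_one t (x+y) ht
  nlinarith [CC_nonneg t]

lemma inner_integrable (t x : ℝ) (ht : 0 < t) (ρ : ℝ → ℝ) (hm : Measurable ρ)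
    (hnn : ∀ y, 0 ≤ ρ y) (hint : Integrable ρ (volume.restrict (Ioi (0:ℝ)))) :
    Integrable (fun y => Gneum t x y * ρ y) (volume.restrict (Ioi (0:ℝ))) := by
  refine Integrable.mono (hint.const_mul (2 * CC t))
    ((((Gneum_continuous t).comp (continuous_const.prodMk continuous_id)).measurable.mul
      hm).aestronglyMeasurable) (Eventually.of_forall fun y => ?_)
  rw [Real.norm_eq_abs, Real.norm_eq_abs,
    abs_of_nonneg (mul_nonneg (Gneum_nonneg t x y) (hnn y)),
    abs_of_nonneg (mul_nonneg (by nlinarith [CC_nonneg t] : (0:ℝ) ≤ 2 * CC t) (hnn y))]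
  exact mul_le_mul_of_nonneg_right (Gneum_le_two t x y ht) (hnn y)

lemma inner_nonneg (t x c : ℝ) (hc : 0 ≤ c) (ρ : ℝ → ℝ) (hnn : ∀ y, 0 ≤ ρ y) :
    0 ≤ c * Gneum t x 0 + ∫ y in Ioi (0:ℝ), Gneum t x y * ρ y :=
  add_nonneg (mul_nonneg hc (Gneum_nonneg t x 0))
    (setIntegral_nonneg measurableSet_Ioi fun y _ =>
      mul_nonneg (Gneum_nonneg t x y) (hnn y))

lemma D_continuous (t c : ℝ) (ht : 0 < t) (ρ : ℝ → ℝ) (hm : Measurable ρ)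
    (hnn : ∀ y, 0 ≤ ρ y) (hint : Integrable ρ (volume.restrict (Ioi (0:ℝ)))) :
    Continuous fun x => c * Gneum t x 0 + ∫ y in Ioi (0:ℝ), Gneum t x y * ρ y := by
  refine (continuous_const.mul (Gneum_cont_left t 0)).add ?_
  rw [continuous_iff_continuousAt]
  intro x₀
  refine continuousAt_of_dominated (bound := fun y => 2 * CC t * ρ y)
    (Eventually.of_forall fun x =>
      (((Gneum_continuous t).comp (continuous_const.prodMk continuous_id)).measurable.mul
        hm).aestronglyMeasurable)
    (Eventually.of_forall fun x => Eventually.of_forall fun y => ?_)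
    (hint.const_mul (2 * CC t))
    (Eventually.of_forall fun y => ?_)
  · rw [Real.norm_eq_abs, abs_of_nonneg (mul_nonneg (Gneum_nonneg t x y) (hnn y))]
    exact mul_le_mul_of_nonneg_right (Gneum_le_two t x y ht) (hnn y)
  · exact (((Gneum_continuous t).comp (continuous_id.prodMk continuous_const)).mul
      continuous_const).continuousAt

lemma heat_tail_repr (t r c : ℝ) (ht : 0 < t) (hr : 0 ≤ r) (hc : 0 ≤ c) (ρ : ℝ → ℝ)
    (hm : Measurable ρ) (hnn : ∀ y, 0 ≤ ρ y)
    (hint : Integrable ρ (volume.restrict (Ioi (0:ℝ)))) :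
    ∫ x in Ioi r, (c * Gneum t x 0 + ∫ y in Ioi (0:ℝ), Gneum t x y * ρ y)
    = (ENNReal.ofReal (Hker t r 0)
        * (ENNReal.ofReal c + ∫⁻ y in Ioi (0:ℝ), ENNReal.ofReal (ρ y))
      + ∫⁻ s in Ioi (0:ℝ), ENNReal.ofReal (hker t r s)
          * ∫⁻ y in Ioi s, ENNReal.ofReal (ρ y)).toReal := by
  rw [integral_eq_lintegral_of_nonneg_ae
    (Eventually.of_forall fun x => inner_nonneg t x c hc ρ hnn)
    ((D_continuous t c ht ρ hm hnn hint).aestronglyMeasurable.restrict)]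
  congr 1
  rw [← Lrep t r c ht hr hc ρ hm]
  refine lintegral_congr fun x => ?_
  rw [ENNReal.ofReal_add (mul_nonneg hc (Gneum_nonneg t x 0))
      (setIntegral_nonneg measurableSet_Ioi fun y _ =>
        mul_nonneg (Gneum_nonneg t x y) (hnn y)),
    ofReal_integral_eq_lintegral_ofReal (inner_integrable t x ht ρ hm hnn hint)
      (Eventually.of_forall fun y => mul_nonneg (Gneum_nonneg t x y) (hnn y))]
  congr 1
  exact lintegral_congr fun y => ENNReal.ofReal_mul (Gneum_nonneg t x y)

end HM

lemma HM.exists_meas_rep (u : ℝ → ℝ) (hnn : ∀ y, 0 ≤ u y)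
    (hint : Integrable u (volume.restrict (Ioi (0:ℝ)))) :
    ∃ ρ : ℝ → ℝ, Measurable ρ ∧ (∀ y, 0 ≤ ρ y) ∧
      Integrable ρ (volume.restrict (Ioi (0:ℝ))) ∧
      u =ᶠ[ae (volume.restrict (Ioi (0:ℝ)))] ρ := by
  have asm := hint.aestronglyMeasurable
  have hae : u =ᶠ[ae (volume.restrict (Ioi (0:ℝ)))] fun y => max (asm.mk u y) 0 :=
    asm.ae_eq_mk.mono fun y hy => by
      show u y = max (AEStronglyMeasurable.mk u asm y) 0
      rw [← hy, max_eq_left (hnn y)]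
  exact ⟨fun y => max (asm.mk u y) 0,
    asm.stronglyMeasurable_mk.measurable.max measurable_const,
    fun y => le_max_right _ _, hint.congr hae, hae⟩

end

/-- the Neumann heat semigroup preserves the mass-transport order. -/
theorem heat_monotone (u v : UEl) (hu : memU u) (hv : memU v)
    (hle : Ule u v) :
    ∀ t : ℝ, 0 < t → Ule (heat t u) (heat t v) := by
  intro t ht r hr
  obtain ⟨ρu, hmu, hnnu, hintu, haeu⟩ := HM.exists_meas_rep u.2 hu.2.1 hu.2.2.1
  obtain ⟨ρv, hmv, hnnv, hintv, haev⟩ := HM.exists_meas_rep v.2 hv.2.1 hv.2.2.1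
  have tail_u : ∀ s : ℝ, 0 ≤ s → (∫ y in Set.Ioi s, u.2 y) = ∫ y in Set.Ioi s, ρu y :=
    fun s hs => integral_congr_ae
      (ae_restrict_of_ae_restrict_of_subset (Set.Ioi_subset_Ioi hs) haeu)
  have tail_v : ∀ s : ℝ, 0 ≤ s → (∫ y in Set.Ioi s, v.2 y) = ∫ y in Set.Ioi s, ρv y :=
    fun s hs => integral_congr_ae
      (ae_restrict_of_ae_restrict_of_subset (Set.Ioi_subset_Ioi hs) haev)
  set Tu : ℝ → ENNReal := fun s => ∫⁻ y in Set.Ioi s, ENNReal.ofReal (ρu y) with hTudef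
  set Tv : ℝ → ENNReal := fun s => ∫⁻ y in Set.Ioi s, ENNReal.ofReal (ρv y) with hTvdef
  have hTu : ∀ s : ℝ, 0 ≤ s → Tu s = ENNReal.ofReal (∫ y in Set.Ioi s, u.2 y) := by
    intro s hs
    rw [tail_u s hs, ofReal_integral_eq_lintegral_ofReal
      (IntegrableOn.mono_set hintu (Set.Ioi_subset_Ioi hs))
      (Eventually.of_forall hnnu)]
  have hTv : ∀ s : ℝ, 0 ≤ s → Tv s = ENNReal.ofReal (∫ y in Set.Ioi s, v.2 y) := by
    intro s hs
    rw [tail_v s hs, ofReal_integral_eq_lintegral_ofReal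
      (IntegrableOn.mono_set hintv (Set.Ioi_subset_Ioi hs))
      (Eventually.of_forall hnnv)]
  have inner_u : ∀ x : ℝ, (∫ y in Set.Ioi (0:ℝ), Gneum t x y * u.2 y)
      = ∫ y in Set.Ioi (0:ℝ), Gneum t x y * ρu y :=
    fun x => integral_congr_ae (haeu.mono fun y hy => by dsimp only; rw [hy])
  have inner_v : ∀ x : ℝ, (∫ y in Set.Ioi (0:ℝ), Gneum t x y * v.2 y)
      = ∫ y in Set.Ioi (0:ℝ), Gneum t x y * ρv y :=
    fun x => integral_congr_ae (haev.mono fun y hy => by dsimp only; rw [hy])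
  -- comparison of the ENNReal data
  have h0 : ENNReal.ofReal u.1 + Tu 0 ≤ ENNReal.ofReal v.1 + Tv 0 := by
    rw [hTu 0 le_rfl, hTv 0 le_rfl,
      ← ENNReal.ofReal_add hu.1
        (setIntegral_nonneg measurableSet_Ioi fun y _ => hu.2.1 y),
      ← ENNReal.ofReal_add hv.1
        (setIntegral_nonneg measurableSet_Ioi fun y _ => hv.2.1 y)]
    refine ENNReal.ofReal_le_ofReal ?_
    have := hle 0 le_rfl
    simpa [tailF] using this
  have hS : ∀ s : ℝ, s ∈ Set.Ioi (0:ℝ) → Tu s ≤ Tv s := by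
    intro s hs
    rw [hTu s (le_of_lt hs), hTv s (le_of_lt hs)]
    refine ENNReal.ofReal_le_ofReal ?_
    have := hle s (le_of_lt hs)
    simpa [tailF, if_neg (ne_of_gt (mem_Ioi.1 hs))] using this
  -- finiteness of the v-side
  have hTv0top : Tv 0 ≠ ⊤ := by rw [hTv 0 le_rfl]; exact ENNReal.ofReal_ne_top
  have hmeasb : Measurable fun s => ENNReal.ofReal (HM.CC t * HM.gg t (r - s)) :=
    ENNReal.measurable_ofReal.comp (measurable_const.mul
      ((HM.gg_continuous t).measurable.comp (measurable_const.sub measurable_id)))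
  have hintb : Integrable (fun s => HM.CC t * HM.gg t (r - s))
      (volume.restrict (Set.Ioi (0:ℝ))) := by
    have heq : (fun s => HM.gg t (r - s)) = fun s => HM.gg t (s - r) :=
      funext fun s => by rw [HM.gg, HM.gg]; ring_nf
    have : Integrable (fun s => HM.gg t (r - s)) volume := by
      rw [heq]; exact (HM.gg_integrable t ht).comp_sub_right r
    exact (this.const_mul _).integrableOn
  have hbfin : (∫⁻ s in Set.Ioi (0:ℝ), ENNReal.ofReal (HM.CC t * HM.gg t (r - s))) ≠ ⊤ := by
    rw [← ofReal_integral_eq_lintegral_ofReal hintb (Eventually.of_forall fun s =>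
      mul_nonneg (HM.CC_nonneg t) (HM.gg_nonneg t (r - s)))]
    exact ENNReal.ofReal_ne_top
  have hb : (∫⁻ s in Set.Ioi (0:ℝ), ENNReal.ofReal (HM.hker t r s) * Tv s)
      ≤ (∫⁻ s in Set.Ioi (0:ℝ), ENNReal.ofReal (HM.CC t * HM.gg t (r - s))) * Tv 0 := by
    rw [← lintegral_mul_const _ hmeasb]
    refine lintegral_mono_ae ?_
    rw [ae_restrict_iff' measurableSet_Ioi]
    refine Eventually.of_forall fun s hs => ?_
    refine mul_le_mul' (ENNReal.ofReal_le_ofReal ?_)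
      (lintegral_mono_set (Set.Ioi_subset_Ioi (le_of_lt hs)))
    exact mul_le_mul_of_nonneg_left (sub_le_self _ (HM.gg_nonneg t (r + s)))
      (HM.CC_nonneg t)
  have hfin : ENNReal.ofReal (HM.Hker t r 0)
      * (ENNReal.ofReal v.1 + Tv 0)
      + (∫⁻ s in Set.Ioi (0:ℝ), ENNReal.ofReal (HM.hker t r s) * Tv s) ≠ ⊤ := by
    refine ENNReal.add_ne_top.2 ⟨ENNReal.mul_ne_top ENNReal.ofReal_ne_top
      (ENNReal.add_ne_top.2 ⟨ENNReal.ofReal_ne_top, hTv0top⟩), ?_⟩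
    exact ne_top_of_le_ne_top (ENNReal.mul_ne_top hbfin hTv0top) hb
  have hLuLv : ENNReal.ofReal (HM.Hker t r 0) * (ENNReal.ofReal u.1 + Tu 0)
      + (∫⁻ s in Set.Ioi (0:ℝ), ENNReal.ofReal (HM.hker t r s) * Tu s)
      ≤ ENNReal.ofReal (HM.Hker t r 0) * (ENNReal.ofReal v.1 + Tv 0)
      + (∫⁻ s in Set.Ioi (0:ℝ), ENNReal.ofReal (HM.hker t r s) * Tv s) := by
    refine add_le_add (mul_le_mul_right h0 _) ?_
    refine lintegral_mono_ae ?_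
    rw [ae_restrict_iff' measurableSet_Ioi]
    exact Eventually.of_forall fun s hs => mul_le_mul_right (hS s hs) _
  -- rewrite the goal
  show tailF (heat t u) r ≤ tailF (heat t v) r
  have goal_u : tailF (heat t u) r
      = ∫ x in Set.Ioi r, (u.1 * Gneum t x 0 + ∫ y in Set.Ioi (0:ℝ), Gneum t x y * ρu y) := by
    rw [tailF]
    simp only [heat, ite_self]
    rw [zero_add]
    exact integral_congr_ae (Eventually.of_forall fun x => by dsimp only; rw [inner_u x])
  have goal_v : tailF (heat t v) r
      = ∫ x in Set.Ioi r, (v.1 * Gneum t x 0 + ∫ y in Set.Ioi (0:ℝ), Gneum t x y * ρv y) := by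
    rw [tailF]
    simp only [heat, ite_self]
    rw [zero_add]
    exact integral_congr_ae (Eventually.of_forall fun x => by dsimp only; rw [inner_v x])
  rw [goal_u, goal_v,
    HM.heat_tail_repr t r u.1 ht hr hu.1 ρu hmu hnnu hintu,
    HM.heat_tail_repr t r v.1 ht hr hv.1 ρv hmv hnnv hintv]
  exact ENNReal.toReal_mono hfin hLuLv
end

section
/- Let j > 0, δ > 0 and let u, v ∈ 𝓤_δ with u ≤ v. Then: (i) K^{(δ)}u ≤ u; (ii) K^{(δ)}u ≤ K^{(δ)}v; (iii) the truncations satisfy (c_u, ρ_u 𝟙_{[0,R_δ(u)]}) ≤ (c_v, ρ_v 𝟙_{[0,R_δ(v)]}). -/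
open MeasureTheory Set Filter

open Topology

noncomputable section

namespace CPhelper

def tRho (w : UEl) : ℝ → ℝ := (Set.Ioi (0:ℝ)).indicator w.2

def gG (w : UEl) (r : ℝ) : ℝ :=
  (∫ x in Set.Ioi (0:ℝ), w.2 x) - ∫ x in (0:ℝ)..r, tRho w x

lemma tRho_integrable {w : UEl} (hw : memU w) : Integrable (tRho w) := by
  have h : IntegrableOn w.2 (Set.Ioi (0:ℝ)) volume := hw.2.2.1
  exact h.integrable_indicator measurableSet_Ioi

lemma intOn {w : UEl} (hw : memU w) {r : ℝ} (hr : 0 ≤ r) :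
    IntegrableOn w.2 (Set.Ioi r) := by
  have h : IntegrableOn w.2 (Set.Ioi (0:ℝ)) volume := hw.2.2.1
  exact h.mono_set (Set.Ioi_subset_Ioi hr)

lemma gG_cont {w : UEl} (hw : memU w) : Continuous (gG w) :=
  continuous_const.sub <|
    intervalIntegral.continuous_primitive (fun a b => (tRho_integrable hw).intervalIntegrable) 0

lemma gG_eq {w : UEl} (hw : memU w) {r : ℝ} (hr : 0 ≤ r) :
    gG w r = ∫ x in Set.Ioi r, w.2 x := by
  have h1 : (∫ x in (0:ℝ)..r, tRho w x) = ∫ x in Set.Ioc (0:ℝ) r, w.2 x := by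
    rw [intervalIntegral.integral_of_le hr]
    refine setIntegral_congr_fun measurableSet_Ioc (fun x hx => ?_)
    exact Set.indicator_of_mem hx.1 _
  have hsplit : (∫ x in Set.Ioi (0:ℝ), w.2 x)
      = (∫ x in Set.Ioc (0:ℝ) r, w.2 x) + ∫ x in Set.Ioi r, w.2 x := by
    rw [← setIntegral_union (Set.Ioc_disjoint_Ioi le_rfl) measurableSet_Ioi
      ((intOn hw le_rfl).mono_set Set.Ioc_subset_Ioi_self) (intOn hw hr),
      Set.Ioc_union_Ioi_eq_Ioi hr]
  rw [gG, h1, hsplit]; ring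

lemma gG_anti {w : UEl} (hw : memU w) {s t : ℝ} (hs : 0 ≤ s) (hst : s ≤ t) :
    gG w t ≤ gG w s := by
  rw [gG_eq hw hs, gG_eq hw (hs.trans hst)]
  exact setIntegral_mono_set (intOn hw hs)
    (Filter.Eventually.of_forall hw.2.1) (HasSubset.Subset.eventuallyLE (Set.Ioi_subset_Ioi hst))

lemma gG_nonneg {w : UEl} (hw : memU w) {r : ℝ} (hr : 0 ≤ r) : 0 ≤ gG w r := by
  rw [gG_eq hw hr]; exact setIntegral_nonneg measurableSet_Ioi (fun x _ => hw.2.1 x)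

lemma tailF_pos {w : UEl} {r : ℝ} (hr : 0 < r) :
    tailF w r = ∫ x in Set.Ioi r, w.2 x := by
  simp [tailF, hr.ne']

lemma tailF_zero {w : UEl} : tailF w 0 = w.1 + ∫ x in Set.Ioi (0:ℝ), w.2 x := by
  simp [tailF]

lemma Rdelta_spec {j δ : ℝ} (hjδ : 0 < j * δ) {w : UEl} (hw : memUdelta j δ w) :
    0 < Rdelta j δ w ∧ gG w (Rdelta j δ w) = j * δ := by
  have hw0 : j * δ < gG w 0 := by rw [gG_eq hw.1 le_rfl]; exact hw.2
  have hSeq : {r : ℝ | 0 ≤ r ∧ tailF w r = j * δ} = {r : ℝ | 0 ≤ r ∧ gG w r = j * δ} := by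
    ext r
    constructor
    · rintro ⟨hr, he⟩
      rcases eq_or_lt_of_le hr with h0 | h0
      · exfalso
        rw [← h0] at he
        rw [tailF_zero] at he
        have := hw.1.1
        nlinarith [hw.2]
      · exact ⟨hr, by rw [gG_eq hw.1 hr, ← tailF_pos h0, he]⟩
    · rintro ⟨hr, he⟩
      rcases eq_or_lt_of_le hr with h0 | h0
      · exfalso; rw [← h0] at he; exact hw0.ne' he
      · exact ⟨hr, by rw [tailF_pos h0, ← gG_eq hw.1 hr, he]⟩
  have hclosed : IsClosed {r : ℝ | 0 ≤ r ∧ gG w r = j * δ} := by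
    have : {r : ℝ | 0 ≤ r ∧ gG w r = j * δ} = Set.Ici 0 ∩ (gG w) ⁻¹' {j * δ} := by
      ext r; simp [Set.mem_Ici, and_comm]
    rw [this]
    exact isClosed_Ici.inter (isClosed_singleton.preimage (gG_cont hw.1))
  have htend : Tendsto (gG w) atTop (𝓝 0) := by
    have h1 : Tendsto (fun r : ℝ => ∫ x in (0:ℝ)..r, tRho w x) atTop
        (𝓝 (∫ x in Set.Ioi (0:ℝ), tRho w x)) :=
      intervalIntegral_tendsto_integral_Ioi 0 ((tRho_integrable hw.1)).integrableOn tendsto_id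
    have h2 : (∫ x in Set.Ioi (0:ℝ), tRho w x) = ∫ x in Set.Ioi (0:ℝ), w.2 x :=
      setIntegral_congr_fun measurableSet_Ioi (fun x hx => Set.indicator_of_mem hx _)
    have := (tendsto_const_nhds (x := (∫ x in Set.Ioi (0:ℝ), w.2 x)) (f := atTop)).sub h1
    rw [h2] at this
    rw [sub_self] at this; exact this
  obtain ⟨b, hb1, hb2⟩ := ((htend.eventually_lt_const hjδ).and (eventually_ge_atTop (0:ℝ))).exists
  have hne : {r : ℝ | 0 ≤ r ∧ gG w r = j * δ}.Nonempty := by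
    have hsub := intermediate_value_Icc' hb2 ((gG_cont hw.1).continuousOn)
    have : j * δ ∈ Set.Icc (gG w b) (gG w 0) := ⟨hb1.le, hw0.le⟩
    obtain ⟨r, hr, hre⟩ := hsub this
    exact ⟨r, hr.1, hre⟩
  have hbdd : BddBelow {r : ℝ | 0 ≤ r ∧ gG w r = j * δ} := ⟨0, fun x hx => hx.1⟩
  have hmem : Rdelta j δ w ∈ {r : ℝ | 0 ≤ r ∧ gG w r = j * δ} := by
    rw [Rdelta, hSeq]
    exact hclosed.csInf_mem hne hbdd
  refine ⟨?_, hmem.2⟩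
  rcases eq_or_lt_of_le hmem.1 with h0 | h0
  · exfalso; rw [← h0] at hmem; exact hw0.ne' hmem.2
  · exact h0

lemma cut_integral {j δ : ℝ} (hjδ : 0 < j * δ) {w : UEl} (hw : memUdelta j δ w)
    {r : ℝ} (hr : 0 ≤ r) :
    (∫ x in Set.Ioi r, (Set.Icc 0 (Rdelta j δ w)).indicator w.2 x)
      = if r ≤ Rdelta j δ w then gG w r - j * δ else 0 := by
  set R := Rdelta j δ w with hR
  obtain ⟨hRpos, hRval⟩ := Rdelta_spec hjδ hw
  have hset : Set.Ioi r ∩ Set.Icc 0 R = Set.Ioc r R := by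
    ext x
    simp only [Set.mem_inter_iff, Set.mem_Ioi, Set.mem_Icc, Set.mem_Ioc]
    exact ⟨fun h => ⟨h.1, h.2.2⟩, fun h => ⟨h.1, hr.trans h.1.le, h.2⟩⟩
  rw [setIntegral_indicator measurableSet_Icc, hset]
  by_cases hrR : r ≤ R
  · rw [if_pos hrR]
    have hsplit : (∫ x in Set.Ioi r, w.2 x)
        = (∫ x in Set.Ioc r R, w.2 x) + ∫ x in Set.Ioi R, w.2 x := by
      rw [← setIntegral_union (Set.Ioc_disjoint_Ioi le_rfl) measurableSet_Ioi
        ((intOn hw.1 hr).mono_set Set.Ioc_subset_Ioi_self) (intOn hw.1 hRpos.le),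
        Set.Ioc_union_Ioi_eq_Ioi hrR]
    have h1 : gG w r = ∫ x in Set.Ioi r, w.2 x := gG_eq hw.1 hr
    have h2 : (∫ x in Set.Ioi R, w.2 x) = j * δ := by rw [← gG_eq hw.1 hRpos.le]; exact hRval
    rw [h1, hsplit, h2]; ring
  · rw [if_neg hrR, Set.Ioc_eq_empty (fun h => hrR h.le)]
    simp


lemma cut_le_cut {j δ : ℝ} (hjδ : 0 < j * δ) {u v : UEl}
    (hu : memUdelta j δ u) (hv : memUdelta j δ v)
    (hgg : ∀ s : ℝ, 0 < s → gG u s ≤ gG v s) {r : ℝ} (hr : 0 < r) :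
    (∫ x in Set.Ioi r, (Set.Icc 0 (Rdelta j δ u)).indicator u.2 x)
      ≤ ∫ x in Set.Ioi r, (Set.Icc 0 (Rdelta j δ v)).indicator v.2 x := by
  obtain ⟨hRu, hRuval⟩ := Rdelta_spec hjδ hu
  obtain ⟨hRv, hRvval⟩ := Rdelta_spec hjδ hv
  rw [cut_integral hjδ hu hr.le, cut_integral hjδ hv hr.le]
  split_ifs with h1 h2 h2
  · linarith [hgg r hr]
  · -- r ≤ Ru, Rv < r : gG u r ≤ gG v r ≤ gG v Rv = jδ
    have := gG_anti hv.1 hRv.le (le_of_lt (not_le.1 h2))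
    linarith [hgg r hr]
  · -- Ru < r ≤ Rv : 0 ≤ gG v r - jδ since gG v r ≥ gG v Rv = jδ
    have := gG_anti hv.1 hr.le h2
    linarith
  · exact le_refl 0

end CPhelper

end

/-- properties of the cut-and-paste operator with respect to the
mass-transport order. -/
theorem cutPaste_order (j δ : ℝ) (hj : 0 < j) (hδ : 0 < δ)
    (u v : UEl) (hu : memUdelta j δ u) (hv : memUdelta j δ v)
    (hle : Ule u v) :
    Ule (cutPaste j δ u) u ∧
    Ule (cutPaste j δ u) (cutPaste j δ v) ∧
    Ule (u.1, Set.indicator (Set.Icc 0 (Rdelta j δ u)) u.2)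
        (v.1, Set.indicator (Set.Icc 0 (Rdelta j δ v)) v.2) := by
  have hjδ : 0 < j * δ := mul_pos hj hδ
  obtain ⟨hRu, hRuval⟩ := CPhelper.Rdelta_spec hjδ hu
  obtain ⟨hRv, hRvval⟩ := CPhelper.Rdelta_spec hjδ hv
  have hgg : ∀ s : ℝ, 0 < s → CPhelper.gG u s ≤ CPhelper.gG v s := by
    intro s hs
    rw [CPhelper.gG_eq hu.1 hs.le, CPhelper.gG_eq hv.1 hs.le,
      ← CPhelper.tailF_pos hs, ← CPhelper.tailF_pos hs]
    exact hle s hs.le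
  have hgg0 : CPhelper.gG u 0 ≤ CPhelper.gG v 0 := by
    have h1 : Tendsto (CPhelper.gG u) (𝓝[>] (0:ℝ)) (𝓝 (CPhelper.gG u 0)) :=
      ((CPhelper.gG_cont hu.1).tendsto 0).mono_left nhdsWithin_le_nhds
    have h2 : Tendsto (CPhelper.gG v) (𝓝[>] (0:ℝ)) (𝓝 (CPhelper.gG v 0)) :=
      ((CPhelper.gG_cont hv.1).tendsto 0).mono_left nhdsWithin_le_nhds
    exact le_of_tendsto_of_tendsto h1 h2
      (eventually_nhdsWithin_of_forall (fun x hx => hgg x hx))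
  refine ⟨?_, ?_, ?_⟩
  · -- (i) K u ≤ u
    intro r hr
    rcases eq_or_lt_of_le hr with h0 | h0
    · rw [← h0]
      rw [CPhelper.tailF_zero, CPhelper.tailF_zero]
      show j * δ + _ ≤ _
      simp only [cutPaste]
      rw [CPhelper.cut_integral hjδ hu le_rfl, if_pos hRu.le,
        ← CPhelper.gG_eq hu.1 le_rfl]
      linarith [hu.1.1]
    · rw [CPhelper.tailF_pos h0, CPhelper.tailF_pos h0]
      show (∫ x in Set.Ioi r, (Set.Icc 0 (Rdelta j δ u)).indicator u.2 x) ≤ _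
      rw [CPhelper.cut_integral hjδ hu h0.le, ← CPhelper.gG_eq hu.1 h0.le]
      split_ifs
      · linarith
      · exact CPhelper.gG_nonneg hu.1 h0.le
  · -- (ii) K u ≤ K v
    intro r hr
    rcases eq_or_lt_of_le hr with h0 | h0
    · rw [← h0]
      rw [CPhelper.tailF_zero, CPhelper.tailF_zero]
      show j * δ + _ ≤ j * δ + _
      simp only [cutPaste]
      rw [CPhelper.cut_integral hjδ hu le_rfl, if_pos hRu.le,
        CPhelper.cut_integral hjδ hv le_rfl, if_pos hRv.le]
      linarith
    · rw [CPhelper.tailF_pos h0, CPhelper.tailF_pos h0]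
      exact CPhelper.cut_le_cut hjδ hu hv hgg h0
  · -- (iii)
    intro r hr
    rcases eq_or_lt_of_le hr with h0 | h0
    · rw [← h0]
      rw [CPhelper.tailF_zero, CPhelper.tailF_zero]
      show u.1 + _ ≤ v.1 + _
      rw [CPhelper.cut_integral hjδ hu le_rfl, if_pos hRu.le,
        CPhelper.cut_integral hjδ hv le_rfl, if_pos hRv.le]
      have h00 := hle 0 le_rfl
      rw [CPhelper.tailF_zero, CPhelper.tailF_zero, ← CPhelper.gG_eq hu.1 le_rfl,
        ← CPhelper.gG_eq hv.1 le_rfl] at h00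
      linarith
    · rw [CPhelper.tailF_pos h0, CPhelper.tailF_pos h0]
      exact CPhelper.cut_le_cut hjδ hu hv hgg h0
end

section
/- Let u, v ∈ 𝓤 and m > 0 with m ≤ ∫₀^∞ ρ_u, and suppose u ≤ v modulo m. Then for every t > 0, G_t^{neum} * u ≤ G_t^{neum} * v modulo m. -/
open MeasureTheory Set Filter

noncomputable section
namespace HeatMono

/-- The 1-d Gaussian density of variance `t`. -/
def g (t x : ℝ) : ℝ := (Real.sqrt (2 * Real.pi * t))⁻¹ * Real.exp (-x^2 / (2*t))

lemma g_nonneg (t x : ℝ) : 0 ≤ g t x := by unfold g; positivity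

lemma g_even (t x : ℝ) : g t (-x) = g t x := by simp [g, neg_sq]

lemma g_eq (t : ℝ) :
    g t = fun x => (Real.sqrt (2 * Real.pi * t))⁻¹ * Real.exp (-(1/(2*t)) * x^2) := by
  funext x; unfold g; congr 2; ring

lemma g_integrable {t : ℝ} (ht : 0 < t) : Integrable (g t) := by
  rw [g_eq]
  exact (integrable_exp_neg_mul_sq (by positivity)).const_mul _

lemma g_cont (t : ℝ) : Continuous (g t) := by
  unfold g; fun_prop

lemma g_total {t : ℝ} (ht : 0 < t) : ∫ x, g t x = 1 := by
  have h2 : (0:ℝ) < 2 * Real.pi * t := by positivity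
  rw [g_eq, integral_const_mul, integral_gaussian,
    show Real.pi / (1/(2*t)) = 2 * Real.pi * t by field_simp]
  exact inv_mul_cancel₀ (ne_of_gt (Real.sqrt_pos.2 h2))

/-- Gaussian tail. -/
def A (t r : ℝ) : ℝ := ∫ x in Ioi r, g t x

lemma A_nonneg (t r : ℝ) : 0 ≤ A t r :=
  setIntegral_nonneg measurableSet_Ioi fun x _ => g_nonneg t x

lemma A_antitone {t : ℝ} (ht : 0 < t) : Antitone (A t) := fun r s hrs =>
  setIntegral_mono_set (g_integrable ht).integrableOn
    (Eventually.of_forall fun x => g_nonneg t x)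
    (HasSubset.Subset.eventuallyLE (Ioi_subset_Ioi hrs))

lemma A_measurable {t : ℝ} (ht : 0 < t) : Measurable (A t) :=
  (A_antitone ht).measurable

lemma A_le_one {t : ℝ} (ht : 0 < t) (r : ℝ) : A t r ≤ 1 := by
  rw [← g_total ht]
  exact setIntegral_le_integral (g_integrable ht) (Eventually.of_forall fun x => g_nonneg t x)

lemma shift_sub (t r s : ℝ) : ∫ x in Ioi r, g t (x - s) = A t (r - s) := by
  have h1 : ∀ x : ℝ, (Ioi r).indicator (fun y => g t (y - s)) x
      = (Ioi (r - s)).indicator (g t) (x - s) := by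
    intro x
    simp only [indicator_apply, mem_Ioi, sub_lt_sub_iff_right]
  calc ∫ x in Ioi r, g t (x - s)
      = ∫ x, (Ioi r).indicator (fun y => g t (y - s)) x :=
        (integral_indicator measurableSet_Ioi).symm
    _ = ∫ x, (Ioi (r - s)).indicator (g t) (x - s) := by simp_rw [h1]
    _ = ∫ x, (Ioi (r - s)).indicator (g t) x := by
        simpa [sub_eq_add_neg] using
          integral_add_right_eq_self ((Ioi (r - s)).indicator (g t)) (-s)
    _ = A t (r - s) := integral_indicator measurableSet_Ioi

lemma shift_add (t r s : ℝ) : ∫ x in Ioi r, g t (x + s) = A t (r + s) := by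
  have := shift_sub t r (-s)
  simpa [sub_neg_eq_add] using this

lemma shift_refl (t r s : ℝ) : ∫ x in Ioi r, g t (s - x) = A t (r - s) := by
  have h1 : ∀ x : ℝ, g t (s - x) = g t (x - s) := fun x => by
    rw [← neg_sub x s, g_even]
  simp_rw [h1]
  exact shift_sub t r s

lemma A_add_A {t : ℝ} (ht : 0 < t) (r : ℝ) : A t r + A t (-r) = 1 := by
  have key : ∫ x in Iic r, g t x = A t (-r) := by
    have h1 : ∀ x : ℝ, (Iic r).indicator (g t) x = (Ici (-r)).indicator (g t) (-x) := by
      intro x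
      by_cases hx : x ≤ r
      · rw [indicator_of_mem (show x ∈ Iic r from hx),
          indicator_of_mem (show -x ∈ Ici (-r) by simpa using hx), g_even]
      · rw [indicator_of_notMem (show x ∉ Iic r from hx),
          indicator_of_notMem (show -x ∉ Ici (-r) by simpa using hx)]
    calc ∫ x in Iic r, g t x
        = ∫ x, (Iic r).indicator (g t) x := (integral_indicator measurableSet_Iic).symm
      _ = ∫ x, (Ici (-r)).indicator (g t) (-x) := by simp_rw [h1]
      _ = ∫ x, (Ici (-r)).indicator (g t) x := integral_neg_eq_self _ _
      _ = ∫ x in Ici (-r), g t x := integral_indicator measurableSet_Ici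
      _ = A t (-r) := setIntegral_congr_set Ioi_ae_eq_Ici.symm
  have hcompl := integral_add_compl (measurableSet_Ioi (a := r)) (g_integrable ht)
  rw [compl_Ioi] at hcompl
  rw [g_total ht] at hcompl
  rw [← key]
  unfold A
  linarith [hcompl]

lemma Gneum_eq (t x s : ℝ) : Gneum t x s = g t (x - s) + g t (x + s) := by
  unfold Gneum g; ring

lemma Gneum_nonneg (t x s : ℝ) : 0 ≤ Gneum t x s := by unfold Gneum; positivity

lemma Gneum_cont (t : ℝ) : Continuous (fun p : ℝ × ℝ => Gneum t p.1 p.2) := by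
  unfold Gneum; fun_prop

lemma Gneum_integrableOn {t : ℝ} (ht : 0 < t) (s r : ℝ) :
    IntegrableOn (fun x => Gneum t x s) (Ioi r) := by
  have h : (fun x => Gneum t x s) = fun x => g t (x - s) + g t (x + s) :=
    funext fun x => Gneum_eq t x s
  rw [h]
  exact (((g_integrable ht).comp_sub_right s).add
    ((g_integrable ht).comp_add_right s)).integrableOn

lemma integral_Gneum {t : ℝ} (ht : 0 < t) (r s : ℝ) :
    ∫ x in Ioi r, Gneum t x s = A t (r - s) + A t (r + s) := by
  simp_rw [Gneum_eq]
  rw [integral_add ((g_integrable ht).comp_sub_right s).integrableOn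
    ((g_integrable ht).comp_add_right s).integrableOn, shift_sub, shift_add]

lemma grefl_integrable {t : ℝ} (ht : 0 < t) (r : ℝ) :
    Integrable (fun x => g t (r - x)) := by
  have h : (fun x => g t (r - x)) = fun x => g t (x - r) :=
    funext fun x => by rw [← neg_sub x r, g_even]
  rw [h]; exact (g_integrable ht).comp_sub_right r

lemma gadd_integrable {t : ℝ} (ht : 0 < t) (r : ℝ) :
    Integrable (fun x => g t (r + x)) := by
  have h : (fun x => g t (r + x)) = fun x => g t (x + r) :=
    funext fun x => by rw [add_comm]
  rw [h]; exact (g_integrable ht).comp_add_right r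

lemma grefl_total (t r : ℝ) : ∫ x in Ioi (0:ℝ), g t (r - x) = A t (-r) := by
  simpa [zero_sub] using shift_refl t 0 r

lemma gadd_total (t r : ℝ) : ∫ x in Ioi (0:ℝ), g t (r + x) = A t r := by
  have h : ∀ x : ℝ, g t (r + x) = g t (x + r) := fun x => by rw [add_comm]
  simp_rw [h]
  simpa using shift_add t 0 r


lemma hh_nonneg {t : ℝ} (ht : 0 < t) {r x : ℝ} (hr : 0 ≤ r) (hx : 0 ≤ x) :
    0 ≤ g t (r - x) - g t (r + x) := by
  rw [sub_nonneg]
  unfold g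
  apply mul_le_mul_of_nonneg_left _ (by positivity)
  apply Real.exp_le_exp.2
  apply (div_le_div_iff_of_pos_right (by positivity)).2
  nlinarith

lemma key {t : ℝ} (ht : 0 < t) (c : ℝ) (ρ : ℝ → ℝ) (hmeas : Measurable ρ)
    (hint : Integrable ρ (volume.restrict (Ioi (0:ℝ)))) (r : ℝ) :
    (∫ x in Ioi r, (c * Gneum t x 0 + ∫ s in Ioi (0:ℝ), Gneum t x s * ρ s))
      = (c + ∫ s in Ioi (0:ℝ), ρ s) * (2 * A t r)
        + ∫ x in Ioi (0:ℝ), (g t (r - x) - g t (r + x)) * (∫ s in Ioi x, ρ s) := by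
  have hKmeas : Measurable (fun s : ℝ => A t (r - s) + A t (r + s)) :=
    ((A_measurable ht).comp (measurable_const.sub measurable_id)).add
      ((A_measurable ht).comp (measurable_const.add measurable_id))
  -- product integrability for the first Fubini
  have hFmeas : AEStronglyMeasurable (fun p : ℝ × ℝ => Gneum t p.1 p.2 * ρ p.2)
      ((volume.restrict (Ioi r)).prod (volume.restrict (Ioi (0:ℝ)))) :=
    (Gneum_cont t).aestronglyMeasurable.mul
      ((hmeas.comp measurable_snd).aestronglyMeasurable)
  have hF : Integrable (fun p : ℝ × ℝ => Gneum t p.1 p.2 * ρ p.2)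
      ((volume.restrict (Ioi r)).prod (volume.restrict (Ioi (0:ℝ)))) := by
    rw [integrable_prod_iff' hFmeas]
    constructor
    · exact Eventually.of_forall fun s => (Gneum_integrableOn ht s r).mul_const (ρ s)
    · have hnorm : ∀ s : ℝ, (∫ x in Ioi r, ‖Gneum t x s * ρ s‖)
          = (A t (r - s) + A t (r + s)) * |ρ s| := by
        intro s
        have h1 : ∀ x : ℝ, ‖Gneum t x s * ρ s‖ = Gneum t x s * |ρ s| := fun x => by
          rw [norm_mul, Real.norm_eq_abs, Real.norm_eq_abs,
            abs_of_nonneg (Gneum_nonneg t x s)]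
        simp_rw [h1]
        rw [integral_mul_const, integral_Gneum ht]
      simp only [hnorm]
      apply Integrable.mono (hint.abs.const_mul 2)
        ((hKmeas.mul hmeas.abs).aestronglyMeasurable)
      refine Eventually.of_forall fun s => ?_
      have h0 : 0 ≤ A t (r - s) + A t (r + s) := by
        have := A_nonneg t (r - s); have := A_nonneg t (r + s); linarith
      have h2 : A t (r - s) + A t (r + s) ≤ 2 := by
        have := A_le_one ht (r - s); have := A_le_one ht (r + s); linarith
      calc ‖(A t (r - s) + A t (r + s)) * |ρ s|‖
          = (A t (r - s) + A t (r + s)) * |ρ s| := by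
            rw [Real.norm_eq_abs, abs_of_nonneg (mul_nonneg h0 (abs_nonneg _))]
        _ ≤ 2 * |ρ s| := mul_le_mul_of_nonneg_right h2 (abs_nonneg _)
        _ ≤ ‖2 * |ρ s|‖ := le_abs_self _
  have hG0 : IntegrableOn (fun x => c * Gneum t x 0) (Ioi r) :=
    (Gneum_integrableOn ht 0 r).const_mul c
  have hInner : IntegrableOn (fun x => ∫ s in Ioi (0:ℝ), Gneum t x s * ρ s) (Ioi r) :=
    hF.integral_prod_left
  rw [integral_add hG0 hInner]
  have e1 : ∫ x in Ioi r, c * Gneum t x 0 = c * (2 * A t r) := by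
    rw [integral_const_mul, integral_Gneum ht, sub_zero, add_zero]; ring
  have e2 : (∫ x in Ioi r, ∫ s in Ioi (0:ℝ), Gneum t x s * ρ s)
      = ∫ s in Ioi (0:ℝ), (A t (r - s) + A t (r + s)) * ρ s := by
    rw [integral_integral_swap hF]
    refine integral_congr_ae (Eventually.of_forall fun s => ?_)
    show (∫ x in Ioi r, Gneum t x s * ρ s) = (A t (r - s) + A t (r + s)) * ρ s
    rw [integral_mul_const, integral_Gneum ht]
  rw [e1, e2]
  -- pointwise decomposition of the kernel tail
  have hK : ∀ s : ℝ, s ∈ Ioi (0:ℝ) → A t (r - s) + A t (r + s)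
      = 2 * A t r + ∫ x in Ioc (0:ℝ) s, (g t (r - x) - g t (r + x)) := by
    intro s hs
    rw [mem_Ioi] at hs
    have h1 : A t (r - s) = (∫ x in Ioc (r - s) r, g t x) + A t r := by
      unfold A
      rw [← setIntegral_union (Ioc_disjoint_Ioi le_rfl) measurableSet_Ioi
        (g_integrable ht).integrableOn (g_integrable ht).integrableOn,
        Ioc_union_Ioi_eq_Ioi (by linarith)]
    have h2 : A t r = (∫ x in Ioc r (r + s), g t x) + A t (r + s) := by
      unfold A
      rw [← setIntegral_union (Ioc_disjoint_Ioi le_rfl) measurableSet_Ioi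
        (g_integrable ht).integrableOn (g_integrable ht).integrableOn,
        Ioc_union_Ioi_eq_Ioi (by linarith)]
    have h3 : ∫ x in Ioc (0:ℝ) s, g t (r - x) = ∫ x in Ioc (r - s) r, g t x := by
      rw [← intervalIntegral.integral_of_le hs.le,
        ← intervalIntegral.integral_of_le (by linarith : r - s ≤ r)]
      simpa using intervalIntegral.integral_comp_sub_left (a := 0) (b := s) (g t) r
    have h4 : ∫ x in Ioc (0:ℝ) s, g t (r + x) = ∫ x in Ioc r (r + s), g t x := by
      rw [← intervalIntegral.integral_of_le hs.le,
        ← intervalIntegral.integral_of_le (by linarith : r ≤ r + s)]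
      simpa using intervalIntegral.integral_comp_add_left (a := 0) (b := s) (g t) r
    have h5 : ∫ x in Ioc (0:ℝ) s, (g t (r - x) - g t (r + x))
        = (∫ x in Ioc (0:ℝ) s, g t (r - x)) - ∫ x in Ioc (0:ℝ) s, g t (r + x) :=
      integral_sub (grefl_integrable ht r).integrableOn (gadd_integrable ht r).integrableOn
    rw [h5, h3, h4]
    linarith
  -- the second Fubini
  set hfun : ℝ → ℝ := fun x => g t (r - x) - g t (r + x) with hhfun
  have hhmeas : Measurable hfun :=
    (((g_cont t).comp (continuous_const.sub continuous_id)).sub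
      ((g_cont t).comp (continuous_const.add continuous_id))).measurable
  have habs : ∀ x : ℝ, |hfun x| ≤ g t (r - x) + g t (r + x) := fun x => by
    rw [hhfun]
    refine (abs_sub _ _).trans ?_
    rw [abs_of_nonneg (g_nonneg _ _), abs_of_nonneg (g_nonneg _ _)]
  have hgg : Integrable (fun x => g t (r - x) + g t (r + x)) volume :=
    (grefl_integrable ht r).add (gadd_integrable ht r)
  have hf2meas : AEStronglyMeasurable
      (fun p : ℝ × ℝ => if p.2 < p.1 then ρ p.1 * hfun p.2 else 0)
      ((volume.restrict (Ioi (0:ℝ))).prod (volume.restrict (Ioi (0:ℝ)))) := by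
    have hs : MeasurableSet {p : ℝ × ℝ | p.2 < p.1} :=
      measurableSet_lt measurable_snd measurable_fst
    have heq : (fun p : ℝ × ℝ => if p.2 < p.1 then ρ p.1 * hfun p.2 else 0)
        = {p : ℝ × ℝ | p.2 < p.1}.indicator (fun p => ρ p.1 * hfun p.2) := by
      funext p; simp [indicator_apply]
    rw [heq]
    exact (((hmeas.comp measurable_fst).mul
      (hhmeas.comp measurable_snd)).indicator hs).aestronglyMeasurable
  have hf2 : Integrable (fun p : ℝ × ℝ => if p.2 < p.1 then ρ p.1 * hfun p.2 else 0)
      ((volume.restrict (Ioi (0:ℝ))).prod (volume.restrict (Ioi (0:ℝ)))) := by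
    apply Integrable.mono (hint.abs.mul_prod hgg.integrableOn) hf2meas
    refine Eventually.of_forall fun p => ?_
    have hggn : 0 ≤ g t (r - p.2) + g t (r + p.2) := by
      have := g_nonneg t (r - p.2); have := g_nonneg t (r + p.2); linarith
    rw [Real.norm_eq_abs, Real.norm_eq_abs, abs_of_nonneg (mul_nonneg (abs_nonneg _) hggn)]
    by_cases hp : p.2 < p.1
    · rw [if_pos hp, abs_mul]
      exact mul_le_mul_of_nonneg_left (habs p.2) (abs_nonneg _)
    · rw [if_neg hp, abs_zero]
      positivity
  have inner1 : ∀ s : ℝ, (∫ x in Ioi (0:ℝ), if x < s then ρ s * hfun x else 0)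
      = ρ s * ∫ x in Ioc (0:ℝ) s, hfun x := by
    intro s
    have heq : (fun x => if x < s then ρ s * hfun x else 0)
        = (Iio s).indicator (fun x => ρ s * hfun x) := by
      funext x; simp [indicator_apply]
    rw [heq, integral_indicator measurableSet_Iio,
      Measure.restrict_restrict measurableSet_Iio,
      show Iio s ∩ Ioi (0:ℝ) = Ioo 0 s by rw [inter_comm, Ioi_inter_Iio],
      integral_const_mul, ← integral_Ioc_eq_integral_Ioo]
  have inner2 : ∀ x : ℝ, x ∈ Ioi (0:ℝ) →
      (∫ s in Ioi (0:ℝ), if x < s then ρ s * hfun x else 0)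
        = hfun x * ∫ s in Ioi x, ρ s := by
    intro x hx
    have heq : (fun s => if x < s then ρ s * hfun x else 0)
        = (Ioi x).indicator (fun s => ρ s * hfun x) := by
      funext s; simp [indicator_apply]
    rw [heq, integral_indicator measurableSet_Ioi,
      Measure.restrict_restrict measurableSet_Ioi,
      show Ioi x ∩ Ioi (0:ℝ) = Ioi x by
        rw [Ioi_inter_Ioi, sup_eq_left.2 (le_of_lt (mem_Ioi.1 hx))],
      integral_mul_const, mul_comm]
  have fub2 : (∫ s in Ioi (0:ℝ), ρ s * ∫ x in Ioc (0:ℝ) s, hfun x)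
      = ∫ x in Ioi (0:ℝ), hfun x * ∫ s in Ioi x, ρ s := by
    calc (∫ s in Ioi (0:ℝ), ρ s * ∫ x in Ioc (0:ℝ) s, hfun x)
        = ∫ s in Ioi (0:ℝ), ∫ x in Ioi (0:ℝ), (if x < s then ρ s * hfun x else 0) := by
          exact integral_congr_ae (Eventually.of_forall fun s => (inner1 s).symm)
      _ = ∫ x in Ioi (0:ℝ), ∫ s in Ioi (0:ℝ), (if x < s then ρ s * hfun x else 0) :=
          integral_integral_swap hf2
      _ = ∫ x in Ioi (0:ℝ), hfun x * ∫ s in Ioi x, ρ s :=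
          setIntegral_congr_fun measurableSet_Ioi fun x hx => inner2 x hx
  -- put everything together
  have hKρ : Integrable (fun s => (A t (r - s) + A t (r + s)) * ρ s)
      (volume.restrict (Ioi (0:ℝ))) := by
    apply Integrable.mono (hint.abs.const_mul 2) ((hKmeas.mul hmeas).aestronglyMeasurable)
    refine Eventually.of_forall fun s => ?_
    have h0 : 0 ≤ A t (r - s) + A t (r + s) := by
      have := A_nonneg t (r - s); have := A_nonneg t (r + s); linarith
    have h2 : A t (r - s) + A t (r + s) ≤ 2 := by
      have := A_le_one ht (r - s); have := A_le_one ht (r + s); linarith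
    calc ‖(A t (r - s) + A t (r + s)) * ρ s‖
        = (A t (r - s) + A t (r + s)) * |ρ s| := by
          rw [Real.norm_eq_abs, abs_mul, abs_of_nonneg h0]
      _ ≤ 2 * |ρ s| := mul_le_mul_of_nonneg_right h2 (abs_nonneg _)
      _ ≤ ‖2 * |ρ s|‖ := le_abs_self _
  have h2A : Integrable (fun s => 2 * A t r * ρ s) (volume.restrict (Ioi (0:ℝ))) :=
    hint.const_mul _
  have e3 : (∫ s in Ioi (0:ℝ), ((A t (r - s) + A t (r + s)) * ρ s - 2 * A t r * ρ s))
      = ∫ s in Ioi (0:ℝ), ρ s * ∫ x in Ioc (0:ℝ) s, hfun x := by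
    refine setIntegral_congr_fun measurableSet_Ioi fun s hs => ?_
    rw [hK s hs]; ring
  rw [integral_sub hKρ h2A] at e3
  have e4 : (∫ s in Ioi (0:ℝ), 2 * A t r * ρ s) = 2 * A t r * ∫ s in Ioi (0:ℝ), ρ s :=
    integral_const_mul _ _
  have e5 : (∫ s in Ioi (0:ℝ), (A t (r - s) + A t (r + s)) * ρ s)
      = 2 * A t r * (∫ s in Ioi (0:ℝ), ρ s)
        + ∫ x in Ioi (0:ℝ), hfun x * ∫ s in Ioi x, ρ s := by
    rw [← fub2]; linarith
  rw [e5, hhfun]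
  ring

end HeatMono

end



open HeatMono

/-- the mass-transport order modulo `m` is preserved by the
Neumann heat semigroup. -/
theorem heat_monotone_mod (u v : UEl) (hu : memU u) (hv : memU v)
    (m : ℝ) (hm : 0 < m) (hm' : m ≤ ∫ r in Set.Ioi (0:ℝ), u.2 r)
    (hle : UleMod u v m) :
    ∀ t : ℝ, 0 < t → UleMod (heat t u) (heat t v) m := by
  intro t ht r hr
  obtain ⟨hu1, hu2, hu3, -⟩ := hu
  obtain ⟨hv1, hv2, hv3, -⟩ := hv
  have hamu := hu3.aestronglyMeasurable
  have hamv := hv3.aestronglyMeasurable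
  set ρu : ℝ → ℝ := hamu.mk u.2 with hρu_def
  set ρv : ℝ → ℝ := hamv.mk v.2 with hρv_def
  have hρu_sm : StronglyMeasurable ρu := hamu.stronglyMeasurable_mk
  have hρv_sm : StronglyMeasurable ρv := hamv.stronglyMeasurable_mk
  have hρu_ae : u.2 =ᵐ[volume.restrict (Ioi (0:ℝ))] ρu := hamu.ae_eq_mk
  have hρv_ae : v.2 =ᵐ[volume.restrict (Ioi (0:ℝ))] ρv := hamv.ae_eq_mk
  have hρu_int : Integrable ρu (volume.restrict (Ioi (0:ℝ))) := hu3.congr hρu_ae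
  have hρv_int : Integrable ρv (volume.restrict (Ioi (0:ℝ))) := hv3.congr hρv_ae
  have hρu_nn : 0 ≤ᵐ[volume.restrict (Ioi (0:ℝ))] ρu := by
    filter_upwards [hρu_ae] with s hs; rw [← hs]; exact hu2 s
  have hρv_nn : 0 ≤ᵐ[volume.restrict (Ioi (0:ℝ))] ρv := by
    filter_upwards [hρv_ae] with s hs; rw [← hs]; exact hv2 s
  -- transfer of tail integrals along a.e. equality
  have tail_eq : ∀ (w w' : ℝ → ℝ), w =ᵐ[volume.restrict (Ioi (0:ℝ))] w' →
      ∀ x : ℝ, 0 ≤ x → (∫ s in Ioi x, w s) = ∫ s in Ioi x, w' s := by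
    intro w w' hae x hx
    exact integral_congr_ae
      (hae.filter_mono (ae_mono (Measure.restrict_mono (Ioi_subset_Ioi hx) le_rfl)))
  -- master formula for the tail of the heat evolution
  have main : ∀ (w : UEl) (w' : ℝ → ℝ), w.2 =ᵐ[volume.restrict (Ioi (0:ℝ))] w' →
      StronglyMeasurable w' → Integrable w' (volume.restrict (Ioi (0:ℝ))) →
      tailF (heat t w) r
        = (w.1 + ∫ s in Ioi (0:ℝ), w' s) * (2 * A t r)
          + ∫ x in Ioi (0:ℝ), (g t (r - x) - g t (r + x)) * (∫ s in Ioi x, w' s) := by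
    intro w w' hae hsm hint'
    have h1 : tailF (heat t w) r
        = ∫ x in Ioi r, (w.1 * Gneum t x 0 + ∫ s in Ioi (0:ℝ), Gneum t x s * w.2 s) := by
      simp [tailF, heat]
    have h2 : ∀ x : ℝ, (∫ s in Ioi (0:ℝ), Gneum t x s * w.2 s)
        = ∫ s in Ioi (0:ℝ), Gneum t x s * w' s := fun x =>
      integral_congr_ae (by filter_upwards [hae] with s hs; rw [hs])
    rw [h1]
    simp_rw [h2]
    exact key ht w.1 w' hsm.measurable hint' r
  have hu_tail := main u ρu hρu_ae hρu_sm hρu_int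
  have hv_tail := main v ρv hρv_ae hρv_sm hρv_int
  -- comparison of total masses
  have hF0u : tailF u 0 = u.1 + ∫ s in Ioi (0:ℝ), ρu s := by
    have h : tailF u 0 = u.1 + ∫ s in Ioi (0:ℝ), u.2 s := by simp [tailF]
    rw [h, tail_eq u.2 ρu hρu_ae 0 le_rfl]
  have hF0v : tailF v 0 = v.1 + ∫ s in Ioi (0:ℝ), ρv s := by
    have h : tailF v 0 = v.1 + ∫ s in Ioi (0:ℝ), v.2 s := by simp [tailF]
    rw [h, tail_eq v.2 ρv hρv_ae 0 le_rfl]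
  have hF0 : u.1 + (∫ s in Ioi (0:ℝ), ρu s)
      ≤ v.1 + (∫ s in Ioi (0:ℝ), ρv s) + m := by
    have h := hle 0 le_rfl
    rw [hF0u, hF0v] at h; linarith
  -- comparison of tails
  have hTx : ∀ x : ℝ, x ∈ Ioi (0:ℝ) →
      (∫ s in Ioi x, ρu s) ≤ (∫ s in Ioi x, ρv s) + m := by
    intro x hx
    have hx' : (0:ℝ) < x := mem_Ioi.1 hx
    have h1 := hle x hx'.le
    have h2 : tailF u x = ∫ s in Ioi x, ρu s := by
      simp only [tailF, if_neg hx'.ne', zero_add]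
      exact tail_eq u.2 ρu hρu_ae x hx'.le
    have h3 : tailF v x = ∫ s in Ioi x, ρv s := by
      simp only [tailF, if_neg hx'.ne', zero_add]
      exact tail_eq v.2 ρv hρv_ae x hx'.le
    rw [h2, h3] at h1; linarith
  -- measurability and boundedness of the tail functions
  have Tprop : ∀ (ρ : ℝ → ℝ), Integrable ρ (volume.restrict (Ioi (0:ℝ))) →
      (0 ≤ᵐ[volume.restrict (Ioi (0:ℝ))] ρ) →
      AEStronglyMeasurable (fun x => ∫ s in Ioi x, ρ s) (volume.restrict (Ioi (0:ℝ)))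
      ∧ ∀ x : ℝ, 0 ≤ x → |∫ s in Ioi x, ρ s| ≤ ∫ s in Ioi (0:ℝ), |ρ s| := by
    intro ρ hi hnn
    constructor
    · have W_anti : Antitone (fun x => ∫ s in Ioi (max x 0), ρ s) := by
        intro a b hab
        have hIa : IntegrableOn ρ (Ioi (max a 0)) :=
          hi.mono_measure (Measure.restrict_mono (Ioi_subset_Ioi (le_max_right a 0)) le_rfl)
        have hnn' : 0 ≤ᵐ[volume.restrict (Ioi (max a 0))] ρ :=
          hnn.filter_mono (ae_mono (Measure.restrict_mono (Ioi_subset_Ioi (le_max_right a 0)) le_rfl))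
        exact setIntegral_mono_set hIa hnn'
          (HasSubset.Subset.eventuallyLE (Ioi_subset_Ioi (max_le_max hab le_rfl)))
      refine (W_anti.measurable.aestronglyMeasurable).congr ?_
      filter_upwards [ae_restrict_mem measurableSet_Ioi] with x hx
      show (∫ s in Ioi (max x 0), ρ s) = ∫ s in Ioi x, ρ s
      rw [max_eq_left (le_of_lt (mem_Ioi.1 hx))]
    · intro x hx
      have h1 : |∫ s in Ioi x, ρ s| ≤ ∫ s in Ioi x, |ρ s| := by
        have := norm_integral_le_integral_norm (μ := volume.restrict (Ioi x)) ρ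
        simpa [Real.norm_eq_abs] using this
      have h2 : (∫ s in Ioi x, |ρ s|) ≤ ∫ s in Ioi (0:ℝ), |ρ s| :=
        setIntegral_mono_set hi.abs (Eventually.of_forall fun s => abs_nonneg _)
          (HasSubset.Subset.eventuallyLE (Ioi_subset_Ioi hx))
      linarith
  obtain ⟨hTu_meas, hTu_bdd⟩ := Tprop ρu hρu_int hρu_nn
  obtain ⟨hTv_meas, hTv_bdd⟩ := Tprop ρv hρv_int hρv_nn
  set Cu := ∫ s in Ioi (0:ℝ), |ρu s| with hCu_def
  set Cv := ∫ s in Ioi (0:ℝ), |ρv s| with hCv_def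
  have hCu : 0 ≤ Cu := setIntegral_nonneg measurableSet_Ioi fun s _ => abs_nonneg _
  have hCv : 0 ≤ Cv := setIntegral_nonneg measurableSet_Ioi fun s _ => abs_nonneg _
  -- the kernel difference
  set hfun : ℝ → ℝ := fun x => g t (r - x) - g t (r + x) with hhfun
  have hhmeas : Measurable hfun :=
    (((g_cont t).comp (continuous_const.sub continuous_id)).sub
      ((g_cont t).comp (continuous_const.add continuous_id))).measurable
  have habs : ∀ x : ℝ, |hfun x| ≤ g t (r - x) + g t (r + x) := fun x => by
    rw [hhfun]
    refine (abs_sub _ _).trans ?_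
    rw [abs_of_nonneg (g_nonneg _ _), abs_of_nonneg (g_nonneg _ _)]
  have hfnn : ∀ x : ℝ, 0 ≤ x → 0 ≤ hfun x := fun x hx => by
    simp only [hhfun]; exact hh_nonneg ht hr hx
  have hgg : Integrable (fun x => g t (r - x) + g t (r + x)) volume :=
    (grefl_integrable ht r).add (gadd_integrable ht r)
  have hfun_int : Integrable hfun volume := by
    rw [hhfun]; exact (grefl_integrable ht r).sub (gadd_integrable ht r)
  -- integrabilities on (0,∞)
  have I1 : IntegrableOn (fun x => hfun x * ∫ s in Ioi x, ρu s) (Ioi (0:ℝ)) := by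
    apply Integrable.mono (hgg.integrableOn.mul_const Cu)
      (hhmeas.aestronglyMeasurable.mul hTu_meas)
    filter_upwards [ae_restrict_mem measurableSet_Ioi] with x hx
    have h1 : |hfun x * ∫ s in Ioi x, ρu s| ≤ (g t (r - x) + g t (r + x)) * Cu := by
      rw [abs_mul]
      exact mul_le_mul (habs x) (hTu_bdd x (le_of_lt (mem_Ioi.1 hx))) (abs_nonneg _)
        (by have := g_nonneg t (r - x); have := g_nonneg t (r + x); linarith)
    calc ‖hfun x * ∫ s in Ioi x, ρu s‖
        = |hfun x * ∫ s in Ioi x, ρu s| := Real.norm_eq_abs _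
      _ ≤ (g t (r - x) + g t (r + x)) * Cu := h1
      _ ≤ ‖(g t (r - x) + g t (r + x)) * Cu‖ := le_abs_self _
  have I2' : IntegrableOn (fun x => hfun x * ∫ s in Ioi x, ρv s) (Ioi (0:ℝ)) := by
    apply Integrable.mono (hgg.integrableOn.mul_const Cv)
      (hhmeas.aestronglyMeasurable.mul hTv_meas)
    filter_upwards [ae_restrict_mem measurableSet_Ioi] with x hx
    have h1 : |hfun x * ∫ s in Ioi x, ρv s| ≤ (g t (r - x) + g t (r + x)) * Cv := by
      rw [abs_mul]
      exact mul_le_mul (habs x) (hTv_bdd x (le_of_lt (mem_Ioi.1 hx))) (abs_nonneg _)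
        (by have := g_nonneg t (r - x); have := g_nonneg t (r + x); linarith)
    calc ‖hfun x * ∫ s in Ioi x, ρv s‖
        = |hfun x * ∫ s in Ioi x, ρv s| := Real.norm_eq_abs _
      _ ≤ (g t (r - x) + g t (r + x)) * Cv := h1
      _ ≤ ‖(g t (r - x) + g t (r + x)) * Cv‖ := le_abs_self _
  have I2 : IntegrableOn (fun x => hfun x * ((∫ s in Ioi x, ρv s) + m)) (Ioi (0:ℝ)) := by
    have e : (fun x => hfun x * ((∫ s in Ioi x, ρv s) + m))
        = fun x => hfun x * (∫ s in Ioi x, ρv s) + m * hfun x := by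
      funext x; ring
    rw [e]
    exact I2'.add (hfun_int.integrableOn.const_mul m)
  -- monotonicity of the integral term
  have mono1 : (∫ x in Ioi (0:ℝ), hfun x * ∫ s in Ioi x, ρu s)
      ≤ ∫ x in Ioi (0:ℝ), hfun x * ((∫ s in Ioi x, ρv s) + m) := by
    refine setIntegral_mono_on I1 I2 measurableSet_Ioi fun x hx => ?_
    exact mul_le_mul_of_nonneg_left (hTx x hx) (hfnn x (le_of_lt (mem_Ioi.1 hx)))
  have split2 : (∫ x in Ioi (0:ℝ), hfun x * ((∫ s in Ioi x, ρv s) + m))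
      = (∫ x in Ioi (0:ℝ), hfun x * (∫ s in Ioi x, ρv s)) + m * (A t (-r) - A t r) := by
    have e : ∀ x : ℝ, hfun x * ((∫ s in Ioi x, ρv s) + m)
        = hfun x * (∫ s in Ioi x, ρv s) + m * hfun x := fun x => by ring
    simp_rw [e]
    rw [integral_add I2' (hfun_int.integrableOn.const_mul m), integral_const_mul]
    have e2 : (∫ x in Ioi (0:ℝ), hfun x) = A t (-r) - A t r := by
      simp only [hhfun]
      rw [integral_sub (grefl_integrable ht r).integrableOn
        (gadd_integrable ht r).integrableOn, grefl_total, gadd_total]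
    rw [e2]
  -- assembly
  have h2Ar : 0 ≤ 2 * A t r := by have := A_nonneg t r; linarith
  have step1 : (u.1 + ∫ s in Ioi (0:ℝ), ρu s) * (2 * A t r)
      ≤ (v.1 + (∫ s in Ioi (0:ℝ), ρv s) + m) * (2 * A t r) :=
    mul_le_mul_of_nonneg_right hF0 h2Ar
  have hAA := A_add_A ht r
  have hmA : m * (2 * A t r) + m * (A t (-r) - A t r) = m := by
    linear_combination m * hAA
  have exp1 : (v.1 + (∫ s in Ioi (0:ℝ), ρv s) + m) * (2 * A t r)
      = (v.1 + ∫ s in Ioi (0:ℝ), ρv s) * (2 * A t r) + m * (2 * A t r) := by ring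
  rw [hu_tail, hv_tail]
  linarith [mono1, split2, step1, exp1, hmA]
end

section
/- Let j > 0, δ > 0, let u, v ∈ 𝓤_δ, let m ≥ jδ and α ≥ 0, and suppose u ≤ v modulo m and F(0; u) ≤ F(0; v) + α. Then K^{(δ)}u ≤ v modulo max(m − jδ, α). -/
open MeasureTheory Set Filter

/-- if `u ≤ v` modulo `m ≥ jδ` and `F(0;u) ≤ F(0;v) + α`, then
`K^{(δ)}u ≤ v` modulo `max(m − jδ, α)`. -/
theorem cutPaste_le_mod (j δ : ℝ) (hj : 0 < j) (hδ : 0 < δ)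
    (u v : UEl) (hu : memUdelta j δ u) (hv : memUdelta j δ v)
    (m α : ℝ) (hm : j * δ ≤ m) (hα : 0 ≤ α)
    (hle : UleMod u v m) (hmass : tailF u 0 ≤ tailF v 0 + α) :
    UleMod (cutPaste j δ u) v (max (m - j * δ) α) := by
  classical
  obtain ⟨⟨hc, hρ, hint, _⟩, hI⟩ := hu
  -- tail of v is nonnegative
  have hvnn : ∀ r, 0 ≤ tailF v r := by
    intro r
    have h1 : (0:ℝ) ≤ ∫ x in Set.Ioi r, v.2 x :=
      integral_nonneg fun x => hv.1.2.1 x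
    have h2 : (0:ℝ) ≤ if r = 0 then v.1 else 0 := by
      split_ifs with h
      exacts [hv.1.1, le_rfl]
    unfold tailF; linarith
  have hintOn : IntegrableOn u.2 (Set.Ioi (0:ℝ)) volume := hint
  set G : ℝ → ℝ := fun r => ∫ x in Set.Ioi r, u.2 x with hGdef
  have hsplit : ∀ {a b : ℝ}, 0 ≤ a → a ≤ b →
      G a = (∫ x in Set.Ioc a b, u.2 x) + G b := by
    intro a b ha hab
    have h1 : IntegrableOn u.2 (Set.Ioc a b) volume :=
      hintOn.mono_set (Set.Ioc_subset_Ioi_self.trans (Set.Ioi_subset_Ioi ha))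
    have h2 : IntegrableOn u.2 (Set.Ioi b) volume :=
      hintOn.mono_set (Set.Ioi_subset_Ioi (ha.trans hab))
    have := setIntegral_union (Set.Ioc_disjoint_Ioi le_rfl) measurableSet_Ioi h1 h2
    rw [Set.Ioc_union_Ioi_eq_Ioi hab] at this
    exact this
  have hIocnn : ∀ a b : ℝ, (0:ℝ) ≤ ∫ x in Set.Ioc a b, u.2 x := fun a b =>
    integral_nonneg fun x => hρ x
  have hG0 : j * δ < G 0 := hI
  -- G tends to 0 at infinity
  have htend : Tendsto G atTop (nhds 0) := by
    have h1 : Tendsto (fun b => ∫ x in (0:ℝ)..b, u.2 x) atTop (nhds (G 0)) :=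
      intervalIntegral_tendsto_integral_Ioi 0 hintOn tendsto_id
    have h2 : Tendsto (fun b => G 0 - ∫ x in (0:ℝ)..b, u.2 x) atTop (nhds (G 0 - G 0)) :=
      tendsto_const_nhds.sub h1
    rw [sub_self] at h2
    refine h2.congr' ?_
    filter_upwards [eventually_ge_atTop (0:ℝ)] with b hb
    rw [intervalIntegral.integral_of_le hb]
    rw [hsplit le_rfl hb]; ring
  -- find b with G b < jδ
  obtain ⟨b, hb0, hGb⟩ : ∃ b, 0 ≤ b ∧ G b < j * δ := by
    have h1 : ∀ᶠ x in atTop, G x < j * δ :=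
      htend.eventually (gt_mem_nhds (by positivity))
    obtain ⟨b, hb1, hb2⟩ := (h1.and (eventually_ge_atTop (0:ℝ))).exists
    exact ⟨b, hb2, hb1⟩
  -- continuity of G on Icc 0 b for any b
  have hcont : ∀ b : ℝ, ContinuousOn G (Set.Icc 0 b) := by
    intro b
    have hint' : IntegrableOn u.2 (Set.Icc 0 b) volume := by
      rw [integrableOn_Icc_iff_integrableOn_Ioc]
      exact hintOn.mono_set Set.Ioc_subset_Ioi_self
    have h1 := intervalIntegral.continuousOn_primitive (a := 0) (b := b) (f := u.2) (μ := volume) hint'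
    have h2 : ContinuousOn (fun x => G 0 - ∫ t in Set.Ioc 0 x, u.2 t) (Set.Icc 0 b) :=
      continuousOn_const.sub h1
    refine h2.congr ?_
    intro x hx
    rw [hsplit le_rfl hx.1]; ring
  -- IVT: a point where G = jδ
  obtain ⟨c, hcIcc, hGc⟩ : ∃ c ∈ Set.Icc (0:ℝ) b, G c = j * δ := by
    have := intermediate_value_Icc' hb0 (hcont b)
    have hmem : j * δ ∈ Set.Icc (G b) (G 0) := ⟨hGb.le, hG0.le⟩
    obtain ⟨c, hc1, hc2⟩ := this hmem
    exact ⟨c, hc1, hc2⟩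
  set S := {r : ℝ | 0 ≤ r ∧ tailF u r = j * δ} with hSdef
  have htail_ne : ∀ r : ℝ, r ≠ 0 → tailF u r = G r := by
    intro r hr; simp [tailF, hr, hGdef]
  have htail0 : tailF u 0 = u.1 + G 0 := by simp [tailF, hGdef]
  have hSpos : ∀ r ∈ S, 0 < r := by
    intro r hr
    rcases hr.1.lt_or_eq with h | h
    · exact h
    · exfalso
      have := hr.2
      rw [← h, htail0] at this
      linarith
  have hcne : c ≠ 0 := by
    intro h; rw [h] at hGc; linarith
  have hcS : c ∈ S := ⟨hcIcc.1, by rw [htail_ne c hcne, hGc]⟩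
  have hbdd : BddBelow S := ⟨0, fun r hr => hr.1⟩
  have hRdef : Rdelta j δ u = sInf S := rfl
  set R := Rdelta j δ u with hR
  have hR0 : 0 ≤ R := by
    rw [hRdef]; exact le_csInf ⟨c, hcS⟩ fun r hr => hr.1
  -- G R = jδ via a sequence in S tending to sInf S
  have hGR : G R = j * δ := by
    obtain ⟨x, hanti, hxlim, hxmem⟩ := exists_seq_tendsto_sInf ⟨c, hcS⟩ hbdd
    have hGx : ∀ n, G (x n) = j * δ := by
      intro n
      have h1 := (hxmem n).2
      rw [htail_ne _ (hSpos _ (hxmem n)).ne'] at h1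
      exact h1
    have hxIcc : ∀ n, x n ∈ Set.Icc (0:ℝ) (x 0) :=
      fun n => ⟨(hxmem n).1, hanti (Nat.zero_le n)⟩
    have hRmem : R ∈ Set.Icc (0:ℝ) (x 0) := by
      refine ⟨hR0, ?_⟩
      rw [hRdef]; exact csInf_le hbdd (hxmem 0)
    have hcw : ContinuousWithinAt G (Set.Icc 0 (x 0)) R := (hcont (x 0)) R hRmem
    rw [← hRdef] at hxlim
    have hlim : Tendsto (fun n => G (x n)) atTop (nhds (G R)) :=
      hcw.tendsto.comp (tendsto_nhdsWithin_iff.mpr ⟨hxlim, Eventually.of_forall hxIcc⟩)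
    have hlim2 : Tendsto (fun n => G (x n)) atTop (nhds (j * δ)) := by
      have heq : (fun n => G (x n)) = fun _ => j * δ := funext hGx
      rw [heq]; exact tendsto_const_nhds
    exact tendsto_nhds_unique hlim hlim2
  have hRpos : 0 < R := by
    rcases hR0.lt_or_eq with h | h
    · exact h
    · exfalso; rw [← h] at hGR; linarith
  -- indicator integral identity
  have hind : ∀ r : ℝ, 0 ≤ r →
      (∫ x in Set.Ioi r, (Set.Icc 0 R).indicator u.2 x) = ∫ x in Set.Ioc r R, u.2 x := by
    intro r hr
    have hset : Set.Ioi r ∩ Set.Icc 0 R = Set.Ioc r R := by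
      ext x
      simp only [Set.mem_inter_iff, Set.mem_Ioi, Set.mem_Icc, Set.mem_Ioc]
      constructor
      · rintro ⟨h1, _, h3⟩; exact ⟨h1, h3⟩
      · rintro ⟨h1, h2⟩; exact ⟨h1, hr.trans h1.le, h2⟩
    rw [setIntegral_indicator measurableSet_Icc, hset]
  have hmax1 : m - j * δ ≤ max (m - j * δ) α := le_max_left _ _
  have hmax2 : α ≤ max (m - j * δ) α := le_max_right _ _
  have hmaxnn : 0 ≤ max (m - j * δ) α := le_trans (by linarith) hmax1
  intro r hr
  have hw : tailF (cutPaste j δ u) r =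
      (if r = 0 then j * δ else 0) + ∫ x in Set.Ioi r, (Set.Icc 0 R).indicator u.2 x := rfl
  rcases eq_or_lt_of_le hr with h0 | h0
  · -- r = 0
    subst h0
    rw [hw, if_pos rfl, hind 0 le_rfl]
    have h1 : G 0 = (∫ x in Set.Ioc (0:ℝ) R, u.2 x) + G R := hsplit le_rfl hRpos.le
    have h2 := hmass
    rw [htail0] at h2
    have h3 := hvnn 0
    linarith
  · -- r > 0
    rw [hw, if_neg h0.ne']
    rcases le_or_gt r R with hrR | hrR
    · rw [hind r hr]
      have h1 : G r = (∫ x in Set.Ioc r R, u.2 x) + G R := hsplit hr hrR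
      have h2 := hle r hr
      rw [htail_ne r h0.ne'] at h2
      linarith
    · have hempty : Set.Ioc r R = ∅ := Set.Ioc_eq_empty (by linarith)
      rw [hind r hr, hempty]
      simp only [Measure.restrict_empty, integral_zero_measure]
      have := hvnn r
      linarith
end
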